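/- arXiv:2512.18898 — 4 statements merged into one kernel-verified Lean document; each statement's English description precedes it below -/
import Mathlib

section
/- Let a, b, c be real numbers with c > 0. (i) If |a² − b²| > c, then |a − b| > √(b² + c) − |b|. (ii) If b ≠ 0, then √(b² + c) − |b| ≥ (√2 − 1)·min(√c, c/|b|); if b = 0, then √(b² + c) − |b| = √c, so in particular √(b² + c) − |b| ≥ (√2 − 1)·√c. -/
/-- **Elementary inequality for differences of squares** (Lemma S3).
Let `a, b, c` be real with `c > 0`.
(i) If `|a² − b²| > c` then `|a − b| > √(b² + c) − |b|`.
(ii) If `b ≠ 0` then `√(b² + c) − |b| ≥ (√2 − 1)·min(√c, c/|b|)`.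
(iii) If `b = 0` then `√(b² + c) − |b| = √c`, so in particular
`√(b² + c) − |b| ≥ (√2 − 1)·√c`. -/
theorem square_diff_inequality (a b c : ℝ) (hc : 0 < c) :
    (c < |a ^ 2 - b ^ 2| → Real.sqrt (b ^ 2 + c) - |b| < |a - b|) ∧
    (b ≠ 0 →
      (Real.sqrt 2 - 1) * min (Real.sqrt c) (c / |b|) ≤ Real.sqrt (b ^ 2 + c) - |b|) ∧
    (b = 0 → Real.sqrt (b ^ 2 + c) - |b| = Real.sqrt c) ∧
    (b = 0 → (Real.sqrt 2 - 1) * Real.sqrt c ≤ Real.sqrt (b ^ 2 + c) - |b|) := by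
  have hbc : (0:ℝ) ≤ b ^ 2 + c := by positivity
  have hs2 : Real.sqrt (b ^ 2 + c) ^ 2 = b ^ 2 + c := Real.sq_sqrt hbc
  have hs0 : 0 ≤ Real.sqrt (b ^ 2 + c) := Real.sqrt_nonneg _
  have hc2 : Real.sqrt c ^ 2 = c := Real.sq_sqrt hc.le
  have hc0 : 0 < Real.sqrt c := Real.sqrt_pos.mpr hc
  have h22 : Real.sqrt 2 ^ 2 = 2 := Real.sq_sqrt (by norm_num)
  have h20 : 0 ≤ Real.sqrt 2 := Real.sqrt_nonneg _
  refine ⟨?_, ?_, ?_, ?_⟩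
  · intro h
    have habs : |a ^ 2 - b ^ 2| = |a - b| * |a + b| := by
      rw [← abs_mul]; ring_nf
    have htri : |a + b| ≤ |a - b| + 2 * |b| := by
      calc |a + b| = |(a - b) + 2 * b| := by ring_nf
        _ ≤ |a - b| + |2 * b| := abs_add_le _ _
        _ = |a - b| + 2 * |b| := by rw [abs_mul]; norm_num
    have h1 : c < |a - b| * (|a - b| + 2 * |b|) := by
      rw [habs] at h
      nlinarith [abs_nonneg (a - b), abs_nonneg (a + b)]
    have h2 : Real.sqrt (b ^ 2 + c) < |a - b| + |b| := by
      have hpos : 0 < |a - b| + |b| := by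
        nlinarith [abs_nonneg (a - b), abs_nonneg b]
      rw [show Real.sqrt (b ^ 2 + c) < |a - b| + |b| ↔
          b ^ 2 + c < (|a - b| + |b|) ^ 2 from Real.sqrt_lt' hpos]
      nlinarith [sq_abs b]
    linarith
  · intro hb
    have hb0 : 0 < |b| := abs_pos.mpr hb
    have hbb : |b| ^ 2 = b ^ 2 := sq_abs b
    rcases le_total (Real.sqrt c) (c / |b|) with hmin | hmin
    · rw [min_eq_left hmin]
      rw [le_div_iff₀ hb0] at hmin
      have h21 : (0:ℝ) ≤ Real.sqrt 2 - 1 := by nlinarith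
      have hcb : |b| ≤ Real.sqrt c := by nlinarith
      have hnn : 0 ≤ (Real.sqrt 2 - 1) * Real.sqrt c + |b| := by nlinarith
      have key : (Real.sqrt 2 - 1) * Real.sqrt c + |b| ≤ Real.sqrt (b ^ 2 + c) := by
        rw [show (Real.sqrt 2 - 1) * Real.sqrt c + |b|
            = Real.sqrt (((Real.sqrt 2 - 1) * Real.sqrt c + |b|) ^ 2) from
          (Real.sqrt_sq hnn).symm]
        apply Real.sqrt_le_sqrt
        have r2c : Real.sqrt 2 ^ 2 * Real.sqrt c ^ 2 = 2 * c := by rw [h22, hc2]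
        nlinarith [mul_nonneg h21 (sub_nonneg.mpr hmin)]
      linarith
    · rw [min_eq_right hmin]
      rw [div_le_iff₀ hb0] at hmin
      have h21 : (0:ℝ) ≤ Real.sqrt 2 - 1 := by nlinarith
      have hcb : Real.sqrt c ≤ |b| := by nlinarith
      have hle : Real.sqrt (b ^ 2 + c) ≤ Real.sqrt 2 * |b| := by
        rw [show Real.sqrt 2 * |b| = Real.sqrt 2 * Real.sqrt (b ^ 2) by
          rw [Real.sqrt_sq_eq_abs]]
        rw [← Real.sqrt_mul (by norm_num)]
        apply Real.sqrt_le_sqrt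
        nlinarith
      have hd : 0 ≤ Real.sqrt (b ^ 2 + c) - |b| := by nlinarith
      have h1 : c ≤ (Real.sqrt (b ^ 2 + c) - |b|) * ((Real.sqrt 2 + 1) * |b|) := by
        nlinarith [mul_nonneg hd (sub_nonneg.mpr hle)]
      have hkey : (Real.sqrt 2 - 1) * c ≤ (Real.sqrt (b ^ 2 + c) - |b|) * |b| := by
        nlinarith [mul_le_mul_of_nonneg_left h1 h21, mul_nonneg hd hb0.le]
      rw [← mul_div_assoc, div_le_iff₀ hb0]
      exact hkey
  · intro hb
    subst hb
    simp
  · intro hb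
    subst hb
    simp only [ne_eq, abs_zero, sub_zero, zero_pow, zero_add]
    norm_num
    nlinarith [mul_nonneg (by nlinarith [sq_nonneg (Real.sqrt 2 - 2)] :
      (0:ℝ) ≤ 2 - Real.sqrt 2) hc0.le]
end

section
/- For every bounded measurable Q : 𝒳 → ℝ: E[H(Q)(V)] = 0 and E[H(Q)(V)²] = E[((1 − π(X))/π(X))·(Q(X) − Q_#(X))²]; moreover (τ/(1 − τ))·‖Q − Q_#‖₂² ≤ E[H(Q)(V)²] ≤ ((1 − τ)/τ)·‖Q − Q_#‖₂². -/
open MeasureTheory ProbabilityTheory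

noncomputable section

/-- The AIPW transformation `T(Q)(x, a′, y) = 1{a′=a}·(y − Q(x))/π(x) + Q(x)`. -/
def Taipw {𝒳 : Type*} (ps : 𝒳 → ℝ) (a : Bool) (Q : 𝒳 → ℝ) (v : 𝒳 × Bool × ℝ) : ℝ :=
  (if v.2.1 = a then (1 : ℝ) else 0) * (v.2.2 - Q v.1) / ps v.1 + Q v.1

/-- `H(Q)(x, a′, y) = (1 − 1{a′=a}/π(x))·(Q(x) − Q_#(x)) = T(Q) − T(Q_#)`. -/
def Haipw {𝒳 : Type*} (ps : 𝒳 → ℝ) (a : Bool) (Qref Q : 𝒳 → ℝ) (v : 𝒳 × Bool × ℝ) : ℝ :=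
  (1 - (if v.2.1 = a then (1 : ℝ) else 0) / ps v.1) * (Q v.1 - Qref v.1)

/-- Bounded measurable functions are integrable on a probability space. -/
lemma integrable_of_bdd {Ω : Type*} [MeasurableSpace Ω] (P : Measure Ω)
    [IsProbabilityMeasure P] {f : Ω → ℝ} (hf : Measurable f) (C : ℝ)
    (hC : ∀ ω, |f ω| ≤ C) : Integrable f P :=
  ⟨hf.aestronglyMeasurable,
    HasFiniteIntegral.of_bounded (C := C) (Filter.Eventually.of_forall hC)⟩

/-- Key conditioning identity: `E[1{A=a} f(X)] = E[π(X) f(X)]` for bounded measurable `f`. -/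
lemma key_cond {𝒳 Ω : Type*} [MeasurableSpace 𝒳] [MeasurableSpace Ω]
    (P : Measure Ω) [IsProbabilityMeasure P]
    (X : Ω → 𝒳) (A : Ω → Bool) (hX : Measurable X) (hA : Measurable A)
    (a : Bool) (ps : 𝒳 → ℝ)
    (hprop : P[(fun ω => if A ω = a then (1 : ℝ) else 0) |
        MeasurableSpace.comap X inferInstance] =ᵐ[P] fun ω => ps (X ω))
    (f : 𝒳 → ℝ) (hfm : Measurable f) (C : ℝ) (hfb : ∀ x, |f x| ≤ C) :
    ∫ ω, (if A ω = a then (1 : ℝ) else 0) * f (X ω) ∂P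
      = ∫ ω, ps (X ω) * f (X ω) ∂P := by
  have hm : MeasurableSpace.comap X inferInstance ≤ _ := hX.comap_le
  have hXm : Measurable[MeasurableSpace.comap X inferInstance] X :=
    Measurable.of_comap_le le_rfl
  have hfXm : StronglyMeasurable[MeasurableSpace.comap X inferInstance]
      (fun ω => f (X ω)) := (hfm.comp hXm).stronglyMeasurable
  have hI : Measurable (fun ω => if A ω = a then (1 : ℝ) else 0) :=
    Measurable.ite (hA (measurableSet_singleton a)) measurable_const measurable_const
  have hIint : Integrable (fun ω => if A ω = a then (1 : ℝ) else 0) P := by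
    refine integrable_of_bdd P hI 1 ?_
    intro ω; split <;> simp
  have hprod : Integrable ((fun ω => f (X ω)) * fun ω => if A ω = a then (1 : ℝ) else 0) P := by
    refine integrable_of_bdd P ((hfm.comp hX).mul hI) (|C| * 1) ?_
    intro ω
    simp only [Pi.mul_apply]
    rw [abs_mul]
    refine mul_le_mul ((hfb (X ω)).trans (le_abs_self C)) ?_ (abs_nonneg _) (abs_nonneg _)
    split <;> simp
  have hpull := condExp_mul_of_stronglyMeasurable_left (μ := P) hfXm hprod hIint
  calc ∫ ω, (if A ω = a then (1 : ℝ) else 0) * f (X ω) ∂P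
      = ∫ ω, ((fun ω => f (X ω)) * fun ω => if A ω = a then (1 : ℝ) else 0) ω ∂P := by
        refine integral_congr_ae (Filter.Eventually.of_forall fun ω => ?_)
        simp [mul_comm]
    _ = ∫ ω, (P[((fun ω => f (X ω)) * fun ω => if A ω = a then (1 : ℝ) else 0) |
          MeasurableSpace.comap X inferInstance]) ω ∂P := (integral_condExp hm (f := (fun ω => f (X ω)) * fun ω => if A ω = a then (1 : ℝ) else 0)).symm
    _ = ∫ ω, ps (X ω) * f (X ω) ∂P := by
        refine integral_congr_ae ?_
        filter_upwards [hpull, hprop] with ω h1 h2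
        simp only [h1, Pi.mul_apply, h2, mul_comm]

/-- **Mean and variance of `H(Q)(V)`** (Lemma S4).
In the randomized-trial setup with known propensity score `π` bounded in `[τ, 1−τ]`,
for every bounded measurable `Q`:
`E[H(Q)(V)] = 0`, `E[H(Q)(V)²] = E[((1−π(X))/π(X))·(Q(X) − Q_#(X))²]`, and
`(τ/(1−τ))·‖Q − Q_#‖₂² ≤ E[H(Q)(V)²] ≤ ((1−τ)/τ)·‖Q − Q_#‖₂²`. -/
theorem H_mean_var {𝒳 Ω : Type*} [MeasurableSpace 𝒳] [MeasurableSpace Ω]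
    (P : Measure Ω) [IsProbabilityMeasure P]
    (X : Ω → 𝒳) (A : Ω → Bool) (Y : Ω → ℝ)
    (hX : Measurable X) (hA : Measurable A) (hY : Measurable Y)
    (a : Bool) (ps : 𝒳 → ℝ) (hps : Measurable ps)
    (τ : ℝ) (hτ : 0 < τ) (hτ' : τ ≤ 1 / 2)
    (hpos : ∀ x, τ ≤ ps x ∧ ps x ≤ 1 - τ)
    (hprop : P[(fun ω => if A ω = a then (1 : ℝ) else 0) |
        MeasurableSpace.comap X inferInstance] =ᵐ[P] fun ω => ps (X ω))
    (Qref : 𝒳 → ℝ) (hQrefm : Measurable Qref)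
    (Mref : ℝ) (hQrefb : ∀ x, |Qref x| ≤ Mref)
    (Q : 𝒳 → ℝ) (hQm : Measurable Q) (M : ℝ) (hQb : ∀ x, |Q x| ≤ M) :
    (∫ ω, Haipw ps a Qref Q (X ω, A ω, Y ω) ∂P) = 0 ∧
    (∫ ω, (Haipw ps a Qref Q (X ω, A ω, Y ω)) ^ 2 ∂P)
      = (∫ ω, ((1 - ps (X ω)) / ps (X ω)) * (Q (X ω) - Qref (X ω)) ^ 2 ∂P) ∧
    (τ / (1 - τ)) * (∫ ω, (Q (X ω) - Qref (X ω)) ^ 2 ∂P)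
      ≤ (∫ ω, (Haipw ps a Qref Q (X ω, A ω, Y ω)) ^ 2 ∂P) ∧
    (∫ ω, (Haipw ps a Qref Q (X ω, A ω, Y ω)) ^ 2 ∂P)
      ≤ ((1 - τ) / τ) * (∫ ω, (Q (X ω) - Qref (X ω)) ^ 2 ∂P) := by
  have hps_pos : ∀ x, 0 < ps x := fun x => lt_of_lt_of_le hτ (hpos x).1
  have hps_ne : ∀ x, ps x ≠ 0 := fun x => (hps_pos x).ne'
  set g : 𝒳 → ℝ := fun x => Q x - Qref x with hg_def
  have hgm : Measurable g := hQm.sub hQrefm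
  have hgb : ∀ x, |g x| ≤ M + Mref := fun x =>
    (abs_sub (Q x) (Qref x)).trans (add_le_add (hQb x) (hQrefb x))
  set C : ℝ := |M| + |Mref| with hC_def
  have hC0 : 0 ≤ C := by positivity
  have hgb' : ∀ x, |g x| ≤ C := fun x =>
    (hgb x).trans (add_le_add (le_abs_self M) (le_abs_self Mref))
  have hτ1 : τ < 1 := lt_of_le_of_lt hτ' (by norm_num)
  have h1τ : 0 < 1 - τ := by linarith
  have hI : Measurable (fun ω => if A ω = a then (1 : ℝ) else 0) :=
    Measurable.ite (hA (measurableSet_singleton a)) measurable_const measurable_const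
  have hIb : ∀ ω, |(if A ω = a then (1 : ℝ) else 0)| ≤ 1 := by
    intro ω; split <;> simp
  have hps_abs : ∀ x, τ ≤ |ps x| := fun x => (hpos x).1.trans (le_abs_self _)
  -- part 1
  have key1 := key_cond P X A hX hA a ps hprop (fun x => g x / ps x)
    (hgm.div hps) (C / τ) (by
      intro x
      rw [abs_div]
      exact div_le_div₀ hC0 (hgb' x) hτ (hps_abs x))
  have hint_gX : Integrable (fun ω => g (X ω)) P :=
    integrable_of_bdd P (hgm.comp hX) C (fun ω => hgb' (X ω))
  have hint_IgX : Integrable (fun ω => (if A ω = a then (1 : ℝ) else 0) * (g (X ω) / ps (X ω))) P := by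
    refine integrable_of_bdd P (hI.mul ((hgm.div hps).comp hX)) (1 * (C / τ)) ?_
    intro ω
    rw [abs_mul]
    refine mul_le_mul (hIb ω) ?_ (abs_nonneg _) zero_le_one
    rw [abs_div]
    exact div_le_div₀ hC0 (hgb' (X ω)) hτ (hps_abs (X ω))
  have part1 : (∫ ω, Haipw ps a Qref Q (X ω, A ω, Y ω) ∂P) = 0 := by
    have heq : ∀ ω, Haipw ps a Qref Q (X ω, A ω, Y ω)
        = g (X ω) - (if A ω = a then (1 : ℝ) else 0) * (g (X ω) / ps (X ω)) := by
      intro ω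
      simp only [Haipw, hg_def]
      ring
    rw [integral_congr_ae (Filter.Eventually.of_forall heq), integral_sub hint_gX hint_IgX, key1]
    have : ∫ ω, ps (X ω) * (g (X ω) / ps (X ω)) ∂P = ∫ ω, g (X ω) ∂P := by
      refine integral_congr_ae (Filter.Eventually.of_forall fun ω => ?_)
      show ps (X ω) * (g (X ω) / ps (X ω)) = g (X ω)
      rw [mul_div_assoc']
      exact mul_div_cancel_left₀ _ (hps_ne (X ω))
    rw [this, sub_self]
  -- part 2
  set h : 𝒳 → ℝ := fun x => g x ^ 2 / ps x ^ 2 - 2 * (g x ^ 2 / ps x) with hh_def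
  have hhm : Measurable h := ((hgm.pow_const 2).div (hps.pow_const 2)).sub
    (((hgm.pow_const 2).div hps).const_mul 2)
  have hg2b : ∀ x, |g x ^ 2| ≤ C ^ 2 := by
    intro x
    rw [abs_pow]
    exact pow_le_pow_left₀ (abs_nonneg _) (hgb' x) 2
  have hps2_abs : ∀ x, τ ^ 2 ≤ |ps x ^ 2| := by
    intro x
    rw [abs_pow]
    exact pow_le_pow_left₀ hτ.le (hps_abs x) 2
  have hhb : ∀ x, |h x| ≤ C ^ 2 / τ ^ 2 + 2 * (C ^ 2 / τ) := by
    intro x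
    refine (abs_sub _ _).trans (add_le_add ?_ ?_)
    · rw [abs_div]
      exact div_le_div₀ (by positivity) (hg2b x) (by positivity) (hps2_abs x)
    · rw [abs_mul, abs_div, abs_two]
      refine mul_le_mul_of_nonneg_left ?_ (by norm_num)
      exact div_le_div₀ (by positivity) (hg2b x) hτ (hps_abs x)
  have key2 := key_cond P X A hX hA a ps hprop h hhm _ hhb
  have hint_g2X : Integrable (fun ω => g (X ω) ^ 2) P :=
    integrable_of_bdd P ((hgm.pow_const 2).comp hX) (C ^ 2) (fun ω => hg2b (X ω))
  have hint_IhX : Integrable (fun ω => (if A ω = a then (1 : ℝ) else 0) * h (X ω)) P := by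
    refine integrable_of_bdd P (hI.mul (hhm.comp hX)) (1 * (C ^ 2 / τ ^ 2 + 2 * (C ^ 2 / τ))) ?_
    intro ω
    rw [abs_mul]
    exact mul_le_mul (hIb ω) (hhb (X ω)) (abs_nonneg _) zero_le_one
  have part2 : (∫ ω, (Haipw ps a Qref Q (X ω, A ω, Y ω)) ^ 2 ∂P)
      = ∫ ω, ((1 - ps (X ω)) / ps (X ω)) * (Q (X ω) - Qref (X ω)) ^ 2 ∂P := by
    have heq : ∀ ω, (Haipw ps a Qref Q (X ω, A ω, Y ω)) ^ 2
        = g (X ω) ^ 2 + (if A ω = a then (1 : ℝ) else 0) * h (X ω) := by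
      intro ω
      have hp := hps_ne (X ω)
      simp only [Haipw, hg_def, hh_def]
      by_cases hAa : A ω = a <;> simp only [hAa, if_pos, if_true, if_neg, if_false] <;>
        [skip; simp [hAa]] <;>
        field_simp <;> ring
    have hint_psh : Integrable (fun ω => ps (X ω) * h (X ω)) P := by
      refine integrable_of_bdd P ((hps.comp hX).mul (hhm.comp hX))
        ((1 - τ) * (C ^ 2 / τ ^ 2 + 2 * (C ^ 2 / τ))) ?_
      intro ω
      rw [abs_mul]
      refine mul_le_mul ?_ (hhb (X ω)) (abs_nonneg _) (by linarith)
      rw [abs_of_pos (hps_pos (X ω))]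
      exact (hpos (X ω)).2
    rw [integral_congr_ae (Filter.Eventually.of_forall heq),
      integral_add hint_g2X hint_IhX, key2, ← integral_add hint_g2X hint_psh]
    refine integral_congr_ae (Filter.Eventually.of_forall fun ω => ?_)
    show g (X ω) ^ 2 + ps (X ω) * h (X ω) = _
    have hp := hps_ne (X ω)
    simp only [hh_def, hg_def]
    field_simp
    ring
  -- pointwise bounds
  have hptlo : ∀ ω, τ / (1 - τ) * (Q (X ω) - Qref (X ω)) ^ 2
      ≤ ((1 - ps (X ω)) / ps (X ω)) * (Q (X ω) - Qref (X ω)) ^ 2 := by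
    intro ω
    refine mul_le_mul_of_nonneg_right ?_ (sq_nonneg _)
    exact div_le_div₀ (by linarith [(hpos (X ω)).2, hps_pos (X ω)])
      (by linarith [(hpos (X ω)).2]) (hps_pos (X ω)) (hpos (X ω)).2
  have hpthi : ∀ ω, ((1 - ps (X ω)) / ps (X ω)) * (Q (X ω) - Qref (X ω)) ^ 2
      ≤ (1 - τ) / τ * (Q (X ω) - Qref (X ω)) ^ 2 := by
    intro ω
    refine mul_le_mul_of_nonneg_right ?_ (sq_nonneg _)
    exact div_le_div₀ h1τ.le (by linarith [(hpos (X ω)).1]) hτ (hpos (X ω)).1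
  have hint_ratio : Integrable (fun ω => ((1 - ps (X ω)) / ps (X ω)) * (Q (X ω) - Qref (X ω)) ^ 2) P := by
    refine integrable_of_bdd P
      (((measurable_const.sub hps).div hps |>.comp hX).mul
        (((hQm.sub hQrefm).pow_const 2).comp hX)) ((1 - τ) / τ * C ^ 2) ?_
    intro ω
    rw [abs_mul]
    refine mul_le_mul ?_ (hg2b (X ω)) (abs_nonneg _) (by positivity)
    rw [abs_div, abs_of_pos (hps_pos (X ω)),
      abs_of_nonneg (by linarith [(hpos (X ω)).2] : (0:ℝ) ≤ 1 - ps (X ω))]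
    exact div_le_div₀ h1τ.le (by linarith [(hpos (X ω)).1]) hτ (hpos (X ω)).1
  have hint_lo : Integrable (fun ω => τ / (1 - τ) * (Q (X ω) - Qref (X ω)) ^ 2) P :=
    hint_g2X.const_mul _
  have hint_hi : Integrable (fun ω => (1 - τ) / τ * (Q (X ω) - Qref (X ω)) ^ 2) P :=
    hint_g2X.const_mul _
  refine ⟨part1, part2, ?_, ?_⟩
  · rw [part2, ← integral_const_mul]
    exact integral_mono hint_lo hint_ratio hptlo
  · rw [part2, ← integral_const_mul]
    exact integral_mono hint_ratio hint_hi hpthi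
end
end

section
/- Assume E[Y²] < ∞, |Q_#| ≤ M, |Q_*| ≤ M, and |Q̂| ≤ M almost surely, for a constant M > 0. Let Z be the real random variable Z(ω′) := P_* T(Q̂_{ω′})². Then E[(Z − E[Z])²] ≤ 16·M²·E[ E(((1 − π(X))/π(X))²·(Q̂(X) − Q_#(X))²) ] ≤ 16·M²·((1 − τ)/τ)²·E‖Q̂ − Q_#‖₂², where the inner expectation is over X for a fixed realization of Q̂ and the outer expectation is over Q̂. -/
open MeasureTheory ProbabilityTheory

noncomputable section

/-- Pull-out property of conditional expectation: for a bounded measurable function of `X`,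
`∫ g(X)·f = ∫ g(X)·h` whenever `E[f | X] = h` a.e. -/
lemma pullout_aux {Ω 𝒳 : Type*} [MeasurableSpace Ω] [MeasurableSpace 𝒳]
    (P : Measure Ω) [IsProbabilityMeasure P] (X : Ω → 𝒳) (hX : Measurable X)
    (f h : Ω → ℝ) (g : 𝒳 → ℝ) (hg : Measurable g)
    (hf : Integrable f P) (hfg : Integrable (fun ω => g (X ω) * f ω) P)
    (hcond : P[f | MeasurableSpace.comap X inferInstance] =ᵐ[P] h) :
    ∫ ω, g (X ω) * f ω ∂P = ∫ ω, g (X ω) * h ω ∂P := by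
  have hm : MeasurableSpace.comap X inferInstance ≤ _ := hX.comap_le
  have hgm : StronglyMeasurable[MeasurableSpace.comap X inferInstance] (fun ω => g (X ω)) :=
    (hg.comp (Measurable.of_comap_le le_rfl)).stronglyMeasurable
  have hfg' : Integrable ((fun ω => g (X ω)) * f) P := hfg
  have hmul := condExp_mul_of_stronglyMeasurable_left (μ := P) hgm hfg' hf
  calc ∫ ω, g (X ω) * f ω ∂P
      = ∫ ω, (P[((fun ω => g (X ω)) * f) | MeasurableSpace.comap X inferInstance]) ω ∂P :=
        (integral_condExp hm).symm
    _ = ∫ ω, g (X ω) * h ω ∂P := by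
        refine integral_congr_ae ?_
        filter_upwards [hmul, hcond] with ω h1 h2
        rw [h1]
        simp only [Pi.mul_apply]
        rw [h2]

/-- Jensen for the square on a probability space: `(∫ f)² ≤ ∫ f²`. -/
lemma sq_integral_le_aux {Ω : Type*} [MeasurableSpace Ω] (P : Measure Ω)
    [IsProbabilityMeasure P] (f : Ω → ℝ) (hf : AEStronglyMeasurable f P)
    (hf2 : Integrable (fun ω => (f ω) ^ 2) P) :
    (∫ ω, f ω ∂P) ^ 2 ≤ ∫ ω, (f ω) ^ 2 ∂P := by
  have hmem : MemLp f 2 P := (memLp_two_iff_integrable_sq hf).2 hf2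
  have h := variance_nonneg f P
  rw [variance_eq_sub hmem] at h
  simp only [Pi.pow_apply] at h
  linarith


lemma integral_add3_aux {Ω : Type*} [MeasurableSpace Ω] (P : Measure Ω) (f g h k : Ω → ℝ)
    (hf : Integrable f P) (hg : Integrable g P) (hh : Integrable h P) (hk : Integrable k P) :
    ∫ ω, (f ω + (g ω + (h ω + k ω))) ∂P
      = (∫ ω, f ω ∂P) + ((∫ ω, g ω ∂P) + ((∫ ω, h ω ∂P) + (∫ ω, k ω ∂P))) := by
  have hhk : Integrable (fun ω => h ω + k ω) P := hh.add hk
  have hghk : Integrable (fun ω => g ω + (h ω + k ω)) P := hg.add hhk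
  rw [integral_add hf hghk, integral_add hg hhk, integral_add hh hk]

lemma integral_add3'_aux {Ω : Type*} [MeasurableSpace Ω] (P : Measure Ω) (f g h : Ω → ℝ)
    (hf : Integrable f P) (hg : Integrable g P) (hh : Integrable h P) :
    (∫ ω, f ω ∂P) + ((∫ ω, g ω ∂P) + (∫ ω, h ω ∂P))
      = ∫ ω, (f ω + (g ω + h ω)) ∂P := by
  have hgh : Integrable (fun ω => g ω + h ω) P := hg.add hh
  rw [integral_add hf hgh, integral_add hg hh]

set_option maxHeartbeats 4000000 in
/-- **Variance bound for the conditional second moment of the transformation of a random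
outcome-model estimate** (from Lemma S5).
Let `Q̂` be a random function (on its own probability space `(Ω', P')`), almost surely
bounded by `M`, and let `Z(ω′) := P_* T(Q̂_{ω′})²`.  Then
`E[(Z − E Z)²] ≤ 16M²·E[E_X(((1−π(X))/π(X))²·(Q̂(X) − Q_#(X))²)]
  ≤ 16M²·((1−τ)/τ)²·E‖Q̂ − Q_#‖₂²`. -/
theorem variance_bound_conditional_second_moment {𝒳 Ω Ω' : Type*}
    [MeasurableSpace 𝒳] [MeasurableSpace Ω] [MeasurableSpace Ω']
    (P : Measure Ω) [IsProbabilityMeasure P]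
    (P' : Measure Ω') [IsProbabilityMeasure P']
    (X : Ω → 𝒳) (A : Ω → Bool) (Y : Ω → ℝ)
    (hX : Measurable X) (hA : Measurable A) (hY : Measurable Y)
    (a : Bool) (ps : 𝒳 → ℝ) (hps : Measurable ps)
    (τ : ℝ) (hτ : 0 < τ) (hτ' : τ ≤ 1 / 2)
    (hpos : ∀ x, τ ≤ ps x ∧ ps x ≤ 1 - τ)
    (hprop : P[(fun ω => if A ω = a then (1 : ℝ) else 0) |
        MeasurableSpace.comap X inferInstance] =ᵐ[P] fun ω => ps (X ω))
    (Qstar : 𝒳 → ℝ) (hQstarm : Measurable Qstar)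
    (houtcome : P[(fun ω => (if A ω = a then (1 : ℝ) else 0) * Y ω) |
        MeasurableSpace.comap X inferInstance] =ᵐ[P] fun ω => ps (X ω) * Qstar (X ω))
    (hY2 : Integrable (fun ω => (Y ω) ^ 2) P)
    (M : ℝ) (hM : 0 < M)
    (Qref : 𝒳 → ℝ) (hQrefm : Measurable Qref) (hQrefb : ∀ x, |Qref x| ≤ M)
    (hQstarb : ∀ x, |Qstar x| ≤ M)
    (Qhat : Ω' → 𝒳 → ℝ) (hQhatm : Measurable (Function.uncurry Qhat))
    (hQhatb : ∀ᵐ ω' ∂P', ∀ x, |Qhat ω' x| ≤ M)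
    (Z : Ω' → ℝ)
    (hZ : ∀ ω', Z ω' = ∫ ω, (Taipw ps a (Qhat ω') (X ω, A ω, Y ω)) ^ 2 ∂P) :
    (∫ ω', (Z ω' - ∫ ω'', Z ω'' ∂P') ^ 2 ∂P')
      ≤ 16 * M ^ 2 * (∫ ω', ∫ ω, ((1 - ps (X ω)) / ps (X ω)) ^ 2
          * (Qhat ω' (X ω) - Qref (X ω)) ^ 2 ∂P ∂P') ∧
    16 * M ^ 2 * (∫ ω', ∫ ω, ((1 - ps (X ω)) / ps (X ω)) ^ 2
          * (Qhat ω' (X ω) - Qref (X ω)) ^ 2 ∂P ∂P')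
      ≤ 16 * M ^ 2 * ((1 - τ) / τ) ^ 2
          * (∫ ω', ∫ ω, (Qhat ω' (X ω) - Qref (X ω)) ^ 2 ∂P ∂P') := by
  -- basic facts about the propensity score
  have hps0 : ∀ x : 𝒳, 0 < ps x := fun x => lt_of_lt_of_le hτ (hpos x).1
  have hps1 : ∀ x : 𝒳, ps x ≤ 1 := fun x => le_trans (hpos x).2 (by linarith)
  have hwb : ∀ x : 𝒳, 0 ≤ (1 - ps x) / ps x ∧ (1 - ps x) / ps x ≤ (1 - τ) / τ := by
    intro x
    obtain ⟨h1, h2⟩ := hpos x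
    constructor
    · exact div_nonneg (by linarith) (hps0 x).le
    · exact div_le_div₀ (by linarith) (by linarith) hτ h1
  -- integrability of Y
  have hY1 : Integrable Y P :=
    ((memLp_two_iff_integrable_sq hY.aestronglyMeasurable).2 hY2).integrable one_le_two
  -- bounded measurable functions of X are integrable
  have intX : ∀ (g : 𝒳 → ℝ) (C : ℝ), Measurable g → (∀ x, |g x| ≤ C) →
      Integrable (fun ω => g (X ω)) P := by
    intro g C hg hb
    refine Integrable.mono' (integrable_const C) ((hg.comp hX).aestronglyMeasurable)
      (ae_of_all _ fun ω => ?_)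
    simpa [Real.norm_eq_abs] using hb (X ω)
  -- difference bounds
  have hdb : ∀ (Q : 𝒳 → ℝ), (∀ x, |Q x| ≤ M) → ∀ x, |Q x - Qref x| ≤ 2 * M := by
    intro Q hb x
    have h1 := abs_le.mp (hb x); have h2 := abs_le.mp (hQrefb x)
    rw [abs_le]; constructor <;> linarith [h1.1, h1.2, h2.1, h2.2]
  -- measurability of the transformation
  have hI : Measurable (fun ω => if A ω = a then (1 : ℝ) else 0) :=
    Measurable.ite (hA (measurableSet_singleton a)) measurable_const measurable_const
  have hTm : ∀ (Q : 𝒳 → ℝ), Measurable Q →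
      Measurable (fun ω => Taipw ps a Q (X ω, A ω, Y ω)) := by
    intro Q hQm
    exact ((hI.mul (hY.sub (hQm.comp hX))).div (hps.comp hX)).add (hQm.comp hX)
  -- pointwise bound on T(Q)²
  have hTb : ∀ (Q : 𝒳 → ℝ), (∀ x, |Q x| ≤ M) → ∀ ω,
      (Taipw ps a Q (X ω, A ω, Y ω)) ^ 2
        ≤ (4 / τ ^ 2) * (Y ω) ^ 2 + (4 * M ^ 2 / τ ^ 2 + 2 * M ^ 2) := by
    intro Q hQb ω
    obtain ⟨h1, h2⟩ := hpos (X ω)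
    have hp0 : 0 < ps (X ω) := hps0 _
    have hq := abs_le.mp (hQb (X ω))
    by_cases h : A ω = a
    · have hshow : Taipw ps a Q (X ω, A ω, Y ω) = (Y ω - Q (X ω)) / ps (X ω) + Q (X ω) := by
        simp only [Taipw, h, if_true, one_mul]
      rw [hshow]
      set p := ps (X ω); set y := Y ω; set q := Q (X ω)
      have hτ2 : (0 : ℝ) < τ ^ 2 := by positivity
      have hpp : τ ^ 2 ≤ p ^ 2 := by nlinarith
      have hu2 : ((y - q) / p) ^ 2 ≤ (y - q) ^ 2 / τ ^ 2 := by
        rw [div_pow]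
        gcongr
      have hy2 : (y - q) ^ 2 ≤ 2 * y ^ 2 + 2 * M ^ 2 := by nlinarith [sq_nonneg (y + q)]
      have hstep : ((y - q) / p + q) ^ 2 ≤ 2 * ((y - q) / p) ^ 2 + 2 * q ^ 2 := by
        nlinarith [sq_nonneg ((y - q) / p - q)]
      have hq2 : q ^ 2 ≤ M ^ 2 := by nlinarith
      have hd : (y - q) ^ 2 / τ ^ 2 ≤ (2 * y ^ 2 + 2 * M ^ 2) / τ ^ 2 := by gcongr
      have heq : (2 * y ^ 2 + 2 * M ^ 2) / τ ^ 2 = (2 / τ ^ 2) * y ^ 2 + 2 * M ^ 2 / τ ^ 2 := by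
        field_simp
      calc ((y - q) / p + q) ^ 2 ≤ 2 * ((y - q) / p) ^ 2 + 2 * q ^ 2 := hstep
        _ ≤ 2 * ((y - q) ^ 2 / τ ^ 2) + 2 * M ^ 2 := by linarith
        _ ≤ 2 * ((2 * y ^ 2 + 2 * M ^ 2) / τ ^ 2) + 2 * M ^ 2 := by linarith
        _ = (4 / τ ^ 2) * y ^ 2 + (4 * M ^ 2 / τ ^ 2 + 2 * M ^ 2) := by
            rw [heq]; ring
    · have hshow : Taipw ps a Q (X ω, A ω, Y ω) = Q (X ω) := by
        simp only [Taipw, h, if_false, zero_mul, zero_div, zero_add]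
      rw [hshow]
      have hq2 : Q (X ω) ^ 2 ≤ M ^ 2 := by nlinarith
      have hh1 : 0 ≤ (4 / τ ^ 2) * (Y ω) ^ 2 := by positivity
      have hh2 : 0 ≤ 4 * M ^ 2 / τ ^ 2 := by positivity
      nlinarith
  -- integrability of T(Q)²
  have hbint : Integrable (fun ω => (4 / τ ^ 2) * (Y ω) ^ 2 + (4 * M ^ 2 / τ ^ 2 + 2 * M ^ 2)) P :=
    (hY2.const_mul _).add (integrable_const _)
  have hTint : ∀ (Q : 𝒳 → ℝ), Measurable Q → (∀ x, |Q x| ≤ M) →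
      Integrable (fun ω => (Taipw ps a Q (X ω, A ω, Y ω)) ^ 2) P := by
    intro Q hQm hQb
    refine hbint.mono' ((hTm Q hQm).pow_const 2).aestronglyMeasurable (ae_of_all _ fun ω => ?_)
    rw [Real.norm_eq_abs, abs_of_nonneg (sq_nonneg _)]
    exact hTb Q hQb ω
  -- the key identity : ∫ T(Q)² = ∫ T(Qref)² + ∫ (Q-Qref)(2Q*-Q-Qref)(ps-1)/ps
  have key : ∀ (Q : 𝒳 → ℝ), Measurable Q → (∀ x, |Q x| ≤ M) →
      (∫ ω, (Taipw ps a Q (X ω, A ω, Y ω)) ^ 2 ∂P)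
        = (∫ ω, (Taipw ps a Qref (X ω, A ω, Y ω)) ^ 2 ∂P)
          + ∫ ω, ((Q (X ω) - Qref (X ω)) * (2 * Qstar (X ω) - Q (X ω) - Qref (X ω))
              * ((ps (X ω) - 1) / ps (X ω))) ∂P := by
    intro Q hQm hQb
    set g1 : 𝒳 → ℝ := fun x => 2 * (ps x - 1) / (ps x) ^ 2 * (Q x - Qref x) with hg1
    set g2 : 𝒳 → ℝ := fun x => (Q x - Qref x) * (Q x + Qref x) with hg2
    set g3 : 𝒳 → ℝ := fun x => (1 - 2 * ps x) / (ps x) ^ 2 * ((Q x - Qref x) * (Q x + Qref x))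
      with hg3
    have hg1m : Measurable g1 := (((measurable_const.mul (hps.sub measurable_const)).div
      (hps.pow_const 2)).mul (hQm.sub hQrefm))
    have hg2m : Measurable g2 := (hQm.sub hQrefm).mul (hQm.add hQrefm)
    have hg3m : Measurable g3 := ((measurable_const.sub (measurable_const.mul hps)).div
      (hps.pow_const 2)).mul ((hQm.sub hQrefm).mul (hQm.add hQrefm))
    have hsb : ∀ x, |Q x + Qref x| ≤ 2 * M := by
      intro x
      have h1 := abs_le.mp (hQb x); have h2 := abs_le.mp (hQrefb x)
      rw [abs_le]; constructor <;> linarith [h1.1, h1.2, h2.1, h2.2]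
    have hfrac : ∀ x, |(2 : ℝ) * (ps x - 1) / (ps x) ^ 2| ≤ 2 / τ ^ 2 := by
      intro x
      obtain ⟨h1, h2⟩ := hpos x
      rw [abs_div]
      refine div_le_div₀ (by positivity) ?_ (by positivity) ?_
      · rw [abs_mul, abs_two, abs_of_nonpos (by linarith [hps1 x])]
        nlinarith [hps0 x]
      · rw [abs_of_nonneg (by positivity)]
        nlinarith
    have hfrac3 : ∀ x, |(1 - 2 * ps x) / (ps x) ^ 2| ≤ 1 / τ ^ 2 := by
      intro x
      obtain ⟨h1, h2⟩ := hpos x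
      rw [abs_div]
      refine div_le_div₀ (by positivity) ?_ (by positivity) ?_
      · rw [abs_le]; constructor <;> nlinarith [hps0 x, hps1 x]
      · rw [abs_of_nonneg (by positivity)]
        nlinarith
    have hg1b : ∀ x, |g1 x| ≤ 2 / τ ^ 2 * (2 * M) := by
      intro x
      rw [hg1, abs_mul]
      exact mul_le_mul (hfrac x) (hdb Q hQb x) (abs_nonneg _) (by positivity)
    have hg2b : ∀ x, |g2 x| ≤ 2 * M * (2 * M) := by
      intro x
      rw [hg2, abs_mul]
      exact mul_le_mul (hdb Q hQb x) (hsb x) (abs_nonneg _) (by positivity)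
    have hg3b : ∀ x, |g3 x| ≤ 1 / τ ^ 2 * (2 * M * (2 * M)) := by
      intro x
      rw [hg3, abs_mul]
      refine mul_le_mul (hfrac3 x) ?_ (abs_nonneg _) (by positivity)
      rw [abs_mul]
      exact mul_le_mul (hdb Q hQb x) (hsb x) (abs_nonneg _) (by positivity)
    -- pointwise decomposition
    have hpt : ∀ ω, (Taipw ps a Q (X ω, A ω, Y ω)) ^ 2
        = (Taipw ps a Qref (X ω, A ω, Y ω)) ^ 2
          + (g1 (X ω) * ((if A ω = a then (1 : ℝ) else 0) * Y ω)
            + (g2 (X ω) + g3 (X ω) * (if A ω = a then (1 : ℝ) else 0))) := by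
      intro ω
      have hp0 : ps (X ω) ≠ 0 := (hps0 _).ne'
      by_cases h : A ω = a
      · simp only [Taipw, hg1, hg2, hg3, h, if_true, one_mul, mul_one]
        field_simp
        ring
      · simp only [Taipw, hg1, hg2, hg3, h, if_false, zero_mul, mul_zero, zero_div,
          zero_add, add_zero]
        ring
    -- integrabilities
    have hF1int : Integrable (fun ω => g1 (X ω) * ((if A ω = a then (1 : ℝ) else 0) * Y ω)) P := by
      refine (hY1.abs.const_mul (2 / τ ^ 2 * (2 * M))).mono'
        ((hg1m.comp hX).mul (hI.mul hY)).aestronglyMeasurable (ae_of_all _ fun ω => ?_)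
      rw [Real.norm_eq_abs]
      by_cases h : A ω = a
      · simp only [h, if_true, one_mul]
        calc |g1 (X ω) * Y ω| = |g1 (X ω)| * |Y ω| := abs_mul _ _
          _ ≤ 2 / τ ^ 2 * (2 * M) * |Y ω| := mul_le_mul_of_nonneg_right (hg1b _) (abs_nonneg _)
      · simp only [h, if_false, zero_mul, mul_zero, abs_zero]
        positivity
    have hF2int : Integrable (fun ω => g2 (X ω)) P := intX g2 _ hg2m hg2b
    have hF3int : Integrable (fun ω => g3 (X ω) * (if A ω = a then (1 : ℝ) else 0)) P := by
      refine (integrable_const (1 / τ ^ 2 * (2 * M * (2 * M)))).mono'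
        ((hg3m.comp hX).mul hI).aestronglyMeasurable (ae_of_all _ fun ω => ?_)
      rw [Real.norm_eq_abs]
      by_cases h : A ω = a
      · simp only [h, if_true, mul_one]
        exact hg3b _
      · simp only [h, if_false, mul_zero, abs_zero]
        positivity
    have hIY : Integrable (fun ω => (if A ω = a then (1 : ℝ) else 0) * Y ω) P := by
      refine hY1.abs.mono' (hI.mul hY).aestronglyMeasurable (ae_of_all _ fun ω => ?_)
      rw [Real.norm_eq_abs]
      by_cases h : A ω = a
      · simp only [h, if_true, one_mul]
        exact le_rfl
      · simp only [h, if_false, zero_mul, abs_zero]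
        exact abs_nonneg _
    have hIint : Integrable (fun ω => (if A ω = a then (1 : ℝ) else 0)) P := by
      refine (integrable_const (1 : ℝ)).mono' hI.aestronglyMeasurable (ae_of_all _ fun ω => ?_)
      rw [Real.norm_eq_abs]
      by_cases h : A ω = a
      · simp [h]
      · simp [h]
    -- split the integral
    have e1 : (∫ ω, (Taipw ps a Q (X ω, A ω, Y ω)) ^ 2 ∂P)
        = (∫ ω, (Taipw ps a Qref (X ω, A ω, Y ω)) ^ 2 ∂P)
          + ((∫ ω, g1 (X ω) * ((if A ω = a then (1 : ℝ) else 0) * Y ω) ∂P)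
            + ((∫ ω, g2 (X ω) ∂P)
              + ∫ ω, g3 (X ω) * (if A ω = a then (1 : ℝ) else 0) ∂P)) := by
      rw [integral_congr_ae (ae_of_all _ hpt)]
      exact integral_add3_aux P _ _ _ _ (hTint Qref hQrefm hQrefb) hF1int hF2int hF3int
    -- apply the pull-out property
    have e2 : (∫ ω, g1 (X ω) * ((if A ω = a then (1 : ℝ) else 0) * Y ω) ∂P)
        = ∫ ω, g1 (X ω) * (ps (X ω) * Qstar (X ω)) ∂P := by
      exact pullout_aux P X hX _ _ g1 hg1m hIY hF1int houtcome
    have e3 : (∫ ω, g3 (X ω) * (if A ω = a then (1 : ℝ) else 0) ∂P)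
        = ∫ ω, g3 (X ω) * ps (X ω) ∂P := by
      exact pullout_aux P X hX _ _ g3 hg3m hIint hF3int hprop
    -- recombine
    have hg1psint : Integrable (fun ω => g1 (X ω) * (ps (X ω) * Qstar (X ω))) P := by
      refine intX (fun x => g1 x * (ps x * Qstar x)) (2 / τ ^ 2 * (2 * M) * (1 * M))
        (hg1m.mul (hps.mul hQstarm)) fun x => ?_
      have hpsq : |ps x * Qstar x| ≤ 1 * M := by
        calc |ps x * Qstar x| = |ps x| * |Qstar x| := abs_mul _ _
          _ ≤ 1 * M := by
              refine mul_le_mul ?_ (hQstarb x) (abs_nonneg _) (by norm_num)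
              rw [abs_of_pos (hps0 x)]; exact hps1 x
      calc |g1 x * (ps x * Qstar x)| = |g1 x| * |ps x * Qstar x| := abs_mul _ _
        _ ≤ 2 / τ ^ 2 * (2 * M) * (1 * M) :=
            mul_le_mul (hg1b x) hpsq (abs_nonneg _) (by positivity)
    have hg3psint : Integrable (fun ω => g3 (X ω) * ps (X ω)) P := by
      refine intX (fun x => g3 x * ps x) (1 / τ ^ 2 * (2 * M * (2 * M)) * 1)
        (hg3m.mul hps) fun x => ?_
      calc |g3 x * ps x| = |g3 x| * |ps x| := abs_mul _ _
        _ ≤ 1 / τ ^ 2 * (2 * M * (2 * M)) * 1 := by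
            refine mul_le_mul (hg3b x) ?_ (abs_nonneg _) (by positivity)
            rw [abs_of_pos (hps0 x)]; exact hps1 x
    have e4 : (∫ ω, g1 (X ω) * (ps (X ω) * Qstar (X ω)) ∂P)
          + ((∫ ω, g2 (X ω) ∂P) + ∫ ω, g3 (X ω) * ps (X ω) ∂P)
        = ∫ ω, ((Q (X ω) - Qref (X ω)) * (2 * Qstar (X ω) - Q (X ω) - Qref (X ω))
            * ((ps (X ω) - 1) / ps (X ω))) ∂P := by
      rw [integral_add3'_aux P _ _ _ hg1psint hF2int hg3psint]
      refine integral_congr_ae (ae_of_all _ fun ω => ?_)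
      have hp0 : ps (X ω) ≠ 0 := (hps0 _).ne'
      simp only [hg1, hg2, hg3]
      field_simp
      ring
    rw [e1, e2, e3, e4]
  -- ====== global objects ======
  set c : ℝ := ∫ ω, (Taipw ps a Qref (X ω, A ω, Y ω)) ^ 2 ∂P with hc
  set G : Ω' → ℝ := fun ω' => ∫ ω, ((1 - ps (X ω)) / ps (X ω)) ^ 2
      * (Qhat ω' (X ω) - Qref (X ω)) ^ 2 ∂P with hG
  set G2 : Ω' → ℝ := fun ω' => ∫ ω, (Qhat ω' (X ω) - Qref (X ω)) ^ 2 ∂P with hG2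
  set m : ℝ := ∫ ω'', Z ω'' ∂P' with hm
  have hQm' : ∀ ω', Measurable (Qhat ω') := fun ω' => hQhatm.comp measurable_prodMk_left
  -- measurability of Z, G, G2
  have hZsm : StronglyMeasurable Z := by
    have hFm : StronglyMeasurable
        (fun p : Ω' × Ω => (Taipw ps a (Qhat p.1) (X p.2, A p.2, Y p.2)) ^ 2) := by
      have hq : Measurable (fun p : Ω' × Ω => Qhat p.1 (X p.2)) :=
        hQhatm.comp (measurable_fst.prodMk (hX.comp measurable_snd))
      have hIp : Measurable (fun p : Ω' × Ω => if A p.2 = a then (1 : ℝ) else 0) :=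
        Measurable.ite ((hA.comp measurable_snd) (measurableSet_singleton a))
          measurable_const measurable_const
      exact ((((hIp.mul ((hY.comp measurable_snd).sub hq)).div
        ((hps.comp hX).comp measurable_snd)).add hq).pow_const 2).stronglyMeasurable
    have : Z = fun ω' => ∫ ω, (Taipw ps a (Qhat ω') (X ω, A ω, Y ω)) ^ 2 ∂P := funext hZ
    rw [this]
    exact hFm.integral_prod_right'
  have hGsm : StronglyMeasurable G := by
    have hFm : Measurable (fun p : Ω' × Ω => ((1 - ps (X p.2)) / ps (X p.2)) ^ 2
        * (Qhat p.1 (X p.2) - Qref (X p.2)) ^ 2) := by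
      have hq : Measurable (fun p : Ω' × Ω => Qhat p.1 (X p.2)) :=
        hQhatm.comp (measurable_fst.prodMk (hX.comp measurable_snd))
      exact ((((measurable_const.sub ((hps.comp hX).comp measurable_snd)).div
        ((hps.comp hX).comp measurable_snd)).pow_const 2).mul
        ((hq.sub ((hQrefm.comp hX).comp measurable_snd)).pow_const 2))
    exact hFm.stronglyMeasurable.integral_prod_right'
  have hG2sm : StronglyMeasurable G2 := by
    have hFm : Measurable (fun p : Ω' × Ω => (Qhat p.1 (X p.2) - Qref (X p.2)) ^ 2) := by
      have hq : Measurable (fun p : Ω' × Ω => Qhat p.1 (X p.2)) :=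
        hQhatm.comp (measurable_fst.prodMk (hX.comp measurable_snd))
      exact (hq.sub ((hQrefm.comp hX).comp measurable_snd)).pow_const 2
    exact hFm.stronglyMeasurable.integral_prod_right'
  -- bounds and integrability of G, G2
  have hGnn : ∀ ω', 0 ≤ G ω' := fun ω' => integral_nonneg fun ω => by positivity
  have hG2nn : ∀ ω', 0 ≤ G2 ω' := fun ω' => integral_nonneg fun ω => by positivity
  have hinnerint : ∀ ω', (∀ x, |Qhat ω' x| ≤ M) →
      Integrable (fun ω => ((1 - ps (X ω)) / ps (X ω)) ^ 2
        * (Qhat ω' (X ω) - Qref (X ω)) ^ 2) P := by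
    intro ω' hb
    refine intX (fun x => ((1 - ps x) / ps x) ^ 2 * (Qhat ω' x - Qref x) ^ 2)
      (((1 - τ) / τ) ^ 2 * (2 * M) ^ 2)
      ((((measurable_const.sub hps).div hps).pow_const 2).mul
        (((hQm' ω').sub hQrefm).pow_const 2)) fun x => ?_
    obtain ⟨hw0, hw1⟩ := hwb x
    rw [abs_mul, abs_of_nonneg (by positivity : (0:ℝ) ≤ ((1 - ps x) / ps x) ^ 2),
      abs_of_nonneg (sq_nonneg _)]
    refine mul_le_mul ?_ ?_ (sq_nonneg _) (by positivity)
    · exact pow_le_pow_left₀ hw0 hw1 2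
    · have := hdb (Qhat ω') hb x
      calc (Qhat ω' x - Qref x) ^ 2 = |Qhat ω' x - Qref x| ^ 2 := (sq_abs _).symm
        _ ≤ (2 * M) ^ 2 := pow_le_pow_left₀ (abs_nonneg _) this 2
  have hinner2int : ∀ ω', (∀ x, |Qhat ω' x| ≤ M) →
      Integrable (fun ω => (Qhat ω' (X ω) - Qref (X ω)) ^ 2) P := by
    intro ω' hb
    refine intX (fun x => (Qhat ω' x - Qref x) ^ 2) ((2 * M) ^ 2)
      (((hQm' ω').sub hQrefm).pow_const 2) fun x => ?_
    rw [abs_of_nonneg (sq_nonneg _)]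
    have := hdb (Qhat ω') hb x
    calc (Qhat ω' x - Qref x) ^ 2 = |Qhat ω' x - Qref x| ^ 2 := (sq_abs _).symm
      _ ≤ (2 * M) ^ 2 := pow_le_pow_left₀ (abs_nonneg _) this 2
  have hGub : ∀ᵐ ω' ∂P', G ω' ≤ ((1 - τ) / τ) ^ 2 * (2 * M) ^ 2 := by
    filter_upwards [hQhatb] with ω' hb
    rw [hG]
    calc (∫ ω, ((1 - ps (X ω)) / ps (X ω)) ^ 2 * (Qhat ω' (X ω) - Qref (X ω)) ^ 2 ∂P)
        ≤ ∫ _ω, ((1 - τ) / τ) ^ 2 * (2 * M) ^ 2 ∂P := by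
          refine integral_mono (hinnerint ω' hb) (integrable_const _) fun ω => ?_
          obtain ⟨hw0, hw1⟩ := hwb (X ω)
          refine mul_le_mul (pow_le_pow_left₀ hw0 hw1 2) ?_ (sq_nonneg _) (by positivity)
          have := hdb (Qhat ω') hb (X ω)
          calc (Qhat ω' (X ω) - Qref (X ω)) ^ 2 = |Qhat ω' (X ω) - Qref (X ω)| ^ 2 :=
              (sq_abs _).symm
            _ ≤ (2 * M) ^ 2 := pow_le_pow_left₀ (abs_nonneg _) this 2
      _ = ((1 - τ) / τ) ^ 2 * (2 * M) ^ 2 := by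
          rw [integral_const]; simp
  have hG2ub : ∀ᵐ ω' ∂P', G2 ω' ≤ (2 * M) ^ 2 := by
    filter_upwards [hQhatb] with ω' hb
    rw [hG2]
    calc (∫ ω, (Qhat ω' (X ω) - Qref (X ω)) ^ 2 ∂P)
        ≤ ∫ _ω, (2 * M) ^ 2 ∂P := by
          refine integral_mono (hinner2int ω' hb) (integrable_const _) fun ω => ?_
          have := hdb (Qhat ω') hb (X ω)
          calc (Qhat ω' (X ω) - Qref (X ω)) ^ 2 = |Qhat ω' (X ω) - Qref (X ω)| ^ 2 :=
              (sq_abs _).symm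
            _ ≤ (2 * M) ^ 2 := pow_le_pow_left₀ (abs_nonneg _) this 2
      _ = (2 * M) ^ 2 := by rw [integral_const]; simp
  have hGint : Integrable G P' := by
    refine (integrable_const (((1 - τ) / τ) ^ 2 * (2 * M) ^ 2)).mono'
      hGsm.aestronglyMeasurable ?_
    filter_upwards [hGub] with ω' h
    rw [Real.norm_eq_abs, abs_of_nonneg (hGnn ω')]
    exact h
  have hG2int : Integrable G2 P' := by
    refine (integrable_const ((2 * M) ^ 2)).mono' hG2sm.aestronglyMeasurable ?_
    filter_upwards [hG2ub] with ω' h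
    rw [Real.norm_eq_abs, abs_of_nonneg (hG2nn ω')]
    exact h
  -- boundedness and integrability of Z
  have hZnn : ∀ ω', 0 ≤ Z ω' := by
    intro ω'
    rw [hZ ω']
    exact integral_nonneg fun ω => sq_nonneg _
  have hZub : ∀ᵐ ω' ∂P', Z ω'
      ≤ ∫ ω, ((4 / τ ^ 2) * (Y ω) ^ 2 + (4 * M ^ 2 / τ ^ 2 + 2 * M ^ 2)) ∂P := by
    filter_upwards [hQhatb] with ω' hb
    rw [hZ ω']
    exact integral_mono (hTint _ (hQm' ω') hb) hbint (hTb _ hb)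
  have hZint : Integrable Z P' := by
    refine (integrable_const (∫ ω, ((4 / τ ^ 2) * (Y ω) ^ 2
      + (4 * M ^ 2 / τ ^ 2 + 2 * M ^ 2)) ∂P)).mono' hZsm.aestronglyMeasurable ?_
    filter_upwards [hZub] with ω' h
    rw [Real.norm_eq_abs, abs_of_nonneg (hZnn ω')]
    exact h
  -- ====== pointwise bound: (Z - c)² ≤ 16 M² G  a.e. ======
  have hpw : ∀ᵐ ω' ∂P', (Z ω' - c) ^ 2 ≤ 16 * M ^ 2 * G ω' := by
    filter_upwards [hQhatb] with ω' hb
    set Q : 𝒳 → ℝ := Qhat ω' with hQdef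
    have hQm'' : Measurable Q := hQm' ω'
    -- the identity
    have hk : Z ω' - c = ∫ ω, ((Q (X ω) - Qref (X ω)) * (2 * Qstar (X ω) - Q (X ω) - Qref (X ω))
        * ((ps (X ω) - 1) / ps (X ω))) ∂P := by
      rw [hZ ω', key Q hQm'' hb, hc]
      ring
    -- bounds on the integrands
    have hsb4 : ∀ x, |2 * Qstar x - Q x - Qref x| ≤ 4 * M := by
      intro x
      have h1 := abs_le.mp (hb x); have h2 := abs_le.mp (hQrefb x)
      have h3 := abs_le.mp (hQstarb x)
      rw [abs_le]; constructor <;> linarith [h1.1, h1.2, h2.1, h2.2, h3.1, h3.2]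
    have hφψ : ∀ ω, |(Q (X ω) - Qref (X ω)) * (2 * Qstar (X ω) - Q (X ω) - Qref (X ω))
        * ((ps (X ω) - 1) / ps (X ω))|
        ≤ 4 * M * ((1 - ps (X ω)) / ps (X ω)) * |Q (X ω) - Qref (X ω)| := by
      intro ω
      have hp0 := hps0 (X ω)
      rw [abs_mul, abs_mul, abs_div,
        abs_of_nonpos (show ps (X ω) - 1 ≤ 0 by linarith [hps1 (X ω)]), abs_of_pos hp0]
      obtain ⟨hw0, _⟩ := hwb (X ω)
      calc |Q (X ω) - Qref (X ω)| * |2 * Qstar (X ω) - Q (X ω) - Qref (X ω)|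
            * (-(ps (X ω) - 1) / ps (X ω))
          ≤ |Q (X ω) - Qref (X ω)| * (4 * M) * ((1 - ps (X ω)) / ps (X ω)) := by
            have e : -(ps (X ω) - 1) / ps (X ω) = (1 - ps (X ω)) / ps (X ω) := by ring
            rw [e]
            refine mul_le_mul_of_nonneg_right ?_ hw0
            exact mul_le_mul_of_nonneg_left (hsb4 (X ω)) (abs_nonneg _)
        _ = 4 * M * ((1 - ps (X ω)) / ps (X ω)) * |Q (X ω) - Qref (X ω)| := by ring
    -- integrability of φ and ψ
    have hφint : Integrable (fun ω => (Q (X ω) - Qref (X ω))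
        * (2 * Qstar (X ω) - Q (X ω) - Qref (X ω)) * ((ps (X ω) - 1) / ps (X ω))) P := by
      refine intX (fun x => (Q x - Qref x) * (2 * Qstar x - Q x - Qref x)
        * ((ps x - 1) / ps x)) (2 * M * (4 * M) * ((1 - τ) / τ))
        (((hQm''.sub hQrefm).mul (((measurable_const.mul hQstarm).sub hQm'').sub
          hQrefm)).mul ((hps.sub measurable_const).div hps)) fun x => ?_
      · have hp0 := hps0 x
        obtain ⟨hw0, hw1⟩ := hwb x
        rw [abs_mul, abs_mul, abs_div,
          abs_of_nonpos (show ps x - 1 ≤ 0 by linarith [hps1 x]), abs_of_pos hp0]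
        have e : -(ps x - 1) / ps x = (1 - ps x) / ps x := by ring
        rw [e]
        refine mul_le_mul (mul_le_mul (hdb Q hb x) ?_ (abs_nonneg _) (by positivity))
          hw1 hw0 (by positivity)
        have h1 := abs_le.mp (hb x); have h2 := abs_le.mp (hQrefb x)
        have h3 := abs_le.mp (hQstarb x)
        rw [abs_le]
        constructor <;> linarith [h1.1, h1.2, h2.1, h2.2, h3.1, h3.2]
    have hψm : Measurable (fun x : 𝒳 => 4 * M * ((1 - ps x) / ps x) * |Q x - Qref x|) :=
      (measurable_const.mul ((measurable_const.sub hps).div hps)).mul (hQm''.sub hQrefm).abs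
    have hψb : ∀ x, abs (4 * M * ((1 - ps x) / ps x) * |Q x - Qref x|) ≤
        4 * M * ((1 - τ) / τ) * (2 * M) := by
      intro x
      obtain ⟨hw0, hw1⟩ := hwb x
      rw [abs_of_nonneg (mul_nonneg (mul_nonneg
        (show (0:ℝ) ≤ 4 * M by linarith) hw0) (abs_nonneg _))]
      refine mul_le_mul ?_ (hdb Q hb x) (abs_nonneg _)
        (mul_nonneg (by linarith) (div_nonneg (by linarith) hτ.le))
      exact mul_le_mul_of_nonneg_left hw1 (by linarith)
    have hψint : Integrable (fun ω => 4 * M * ((1 - ps (X ω)) / ps (X ω))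
        * |Q (X ω) - Qref (X ω)|) P :=
      intX _ _ hψm hψb
    have hψ2int : Integrable (fun ω => (4 * M * ((1 - ps (X ω)) / ps (X ω))
        * |Q (X ω) - Qref (X ω)|) ^ 2) P := by
      refine intX (fun x => (4 * M * ((1 - ps x) / ps x) * |Q x - Qref x|) ^ 2)
        ((4 * M * ((1 - τ) / τ) * (2 * M)) ^ 2) (hψm.pow_const 2) fun x => ?_
      rw [abs_of_nonneg (sq_nonneg _)]
      calc (4 * M * ((1 - ps x) / ps x) * |Q x - Qref x|) ^ 2
          = (abs (4 * M * ((1 - ps x) / ps x) * |Q x - Qref x|)) ^ 2 := (sq_abs _).symm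
        _ ≤ (4 * M * ((1 - τ) / τ) * (2 * M)) ^ 2 :=
            pow_le_pow_left₀ (abs_nonneg _) (hψb x) 2
    -- |Z - c| ≤ ∫ ψ
    have habs : |Z ω' - c| ≤ ∫ ω, 4 * M * ((1 - ps (X ω)) / ps (X ω))
        * |Q (X ω) - Qref (X ω)| ∂P := by
      rw [hk]
      calc |∫ ω, ((Q (X ω) - Qref (X ω)) * (2 * Qstar (X ω) - Q (X ω) - Qref (X ω))
            * ((ps (X ω) - 1) / ps (X ω))) ∂P|
          ≤ ∫ ω, |(Q (X ω) - Qref (X ω)) * (2 * Qstar (X ω) - Q (X ω) - Qref (X ω))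
            * ((ps (X ω) - 1) / ps (X ω))| ∂P := by
            have h := norm_integral_le_integral_norm
              (μ := P) (fun ω => (Q (X ω) - Qref (X ω))
                * (2 * Qstar (X ω) - Q (X ω) - Qref (X ω)) * ((ps (X ω) - 1) / ps (X ω)))
            simpa only [Real.norm_eq_abs] using h
        _ ≤ ∫ ω, 4 * M * ((1 - ps (X ω)) / ps (X ω)) * |Q (X ω) - Qref (X ω)| ∂P :=
            integral_mono hφint.abs hψint hφψ
    -- Jensen
    have hJ : (∫ ω, 4 * M * ((1 - ps (X ω)) / ps (X ω)) * |Q (X ω) - Qref (X ω)| ∂P) ^ 2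
        ≤ ∫ ω, (4 * M * ((1 - ps (X ω)) / ps (X ω)) * |Q (X ω) - Qref (X ω)|) ^ 2 ∂P :=
      sq_integral_le_aux P _ (hψm.comp hX).aestronglyMeasurable hψ2int
    -- identify ∫ ψ² with 16 M² G ω'
    have hψ2eq : (∫ ω, (4 * M * ((1 - ps (X ω)) / ps (X ω))
        * |Q (X ω) - Qref (X ω)|) ^ 2 ∂P) = 16 * M ^ 2 * G ω' := by
      rw [hG]
      rw [← integral_const_mul (16 * M ^ 2)]
      refine integral_congr_ae (ae_of_all _ fun ω => ?_)
      have e : |Q (X ω) - Qref (X ω)| ^ 2 = (Q (X ω) - Qref (X ω)) ^ 2 := sq_abs _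
      calc (4 * M * ((1 - ps (X ω)) / ps (X ω)) * |Q (X ω) - Qref (X ω)|) ^ 2
          = 16 * M ^ 2 * (((1 - ps (X ω)) / ps (X ω)) ^ 2 * |Q (X ω) - Qref (X ω)| ^ 2) := by
            ring
        _ = 16 * M ^ 2 * (((1 - ps (X ω)) / ps (X ω)) ^ 2
            * (Qhat ω' (X ω) - Qref (X ω)) ^ 2) := by rw [e]
    calc (Z ω' - c) ^ 2 = |Z ω' - c| ^ 2 := (sq_abs _).symm
      _ ≤ (∫ ω, 4 * M * ((1 - ps (X ω)) / ps (X ω)) * |Q (X ω) - Qref (X ω)| ∂P) ^ 2 :=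
          pow_le_pow_left₀ (abs_nonneg _) habs 2
      _ ≤ ∫ ω, (4 * M * ((1 - ps (X ω)) / ps (X ω)) * |Q (X ω) - Qref (X ω)|) ^ 2 ∂P := hJ
      _ = 16 * M ^ 2 * G ω' := hψ2eq
  -- integrability of (Z - c)²
  have hZc2int : Integrable (fun ω' => (Z ω' - c) ^ 2) P' := by
    refine (hGint.const_mul (16 * M ^ 2)).mono'
      (((hZsm.measurable.sub measurable_const).pow_const 2).aestronglyMeasurable) ?_
    filter_upwards [hpw] with ω' h
    rw [Real.norm_eq_abs, abs_of_nonneg (sq_nonneg _)]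
    exact h
  have hZcint : Integrable (fun ω' => Z ω' - c) P' := hZint.sub (integrable_const c)
  -- variance inequality: ∫ (Z - m)² ≤ ∫ (Z - c)²
  have hvar : (∫ ω', (Z ω' - m) ^ 2 ∂P') ≤ ∫ ω', (Z ω' - c) ^ 2 ∂P' := by
    have hZcavg : (∫ ω', (Z ω' - c) ∂P') = m - c := by
      rw [integral_sub hZint (integrable_const c), integral_const]
      simp [hm]
    have e : ∀ ω', (Z ω' - m) ^ 2
        = (Z ω' - c) ^ 2 - 2 * (m - c) * (Z ω' - c) + (m - c) ^ 2 := by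
      intro ω'; ring
    have i1 : Integrable (fun ω' => 2 * (m - c) * (Z ω' - c)) P' := hZcint.const_mul _
    have i2 : Integrable (fun ω' => (Z ω' - c) ^ 2 - 2 * (m - c) * (Z ω' - c)) P' :=
      hZc2int.sub i1
    rw [integral_congr_ae (ae_of_all _ e)]
    rw [integral_add i2 (integrable_const ((m - c) ^ 2)), integral_sub hZc2int i1,
      integral_const_mul, hZcavg, integral_const]
    have : P'.real Set.univ = 1 := by simp
    rw [this, one_smul]
    nlinarith [sq_nonneg (m - c)]
  constructor
  · calc (∫ ω', (Z ω' - m) ^ 2 ∂P') ≤ ∫ ω', (Z ω' - c) ^ 2 ∂P' := hvar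
      _ ≤ ∫ ω', 16 * M ^ 2 * G ω' ∂P' :=
          integral_mono_ae hZc2int (hGint.const_mul (16 * M ^ 2)) hpw
      _ = 16 * M ^ 2 * ∫ ω', G ω' ∂P' := integral_const_mul _ _
  · have hGG2 : ∀ᵐ ω' ∂P', G ω' ≤ ((1 - τ) / τ) ^ 2 * G2 ω' := by
      filter_upwards [hQhatb] with ω' hb
      rw [hG, hG2]
      rw [← integral_const_mul (((1 - τ) / τ) ^ 2)]
      refine integral_mono (hinnerint ω' hb) ((hinner2int ω' hb).const_mul _) fun ω => ?_
      obtain ⟨hw0, hw1⟩ := hwb (X ω)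
      exact mul_le_mul_of_nonneg_right (pow_le_pow_left₀ hw0 hw1 2) (sq_nonneg _)
    have h1 : (∫ ω', G ω' ∂P') ≤ ((1 - τ) / τ) ^ 2 * ∫ ω', G2 ω' ∂P' := by
      calc (∫ ω', G ω' ∂P') ≤ ∫ ω', ((1 - τ) / τ) ^ 2 * G2 ω' ∂P' :=
            integral_mono_ae hGint (hG2int.const_mul _) hGG2
        _ = ((1 - τ) / τ) ^ 2 * ∫ ω', G2 ω' ∂P' := integral_const_mul _ _
    calc 16 * M ^ 2 * (∫ ω', G ω' ∂P')
        ≤ 16 * M ^ 2 * (((1 - τ) / τ) ^ 2 * ∫ ω', G2 ω' ∂P') :=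
          mul_le_mul_of_nonneg_left h1 (by positivity)
      _ = 16 * M ^ 2 * ((1 - τ) / τ) ^ 2 * (∫ ω', G2 ω' ∂P') := by ring
end
end

section
/- Exact decomposition of the bias of the non-cross-fit plug-in variance estimator under projection conditions. In the non-cross-fit setup, assume |Q̃| ≤ M almost surely and |Q_#| ≤ M for a constant M > 0, and assume the projection conditions: almost surely P_n( (1{A=a}/π(X))·(Y − Q̃(X))·Q̃(X) ) = 0, and E( (1{A=a}/π(X))·(Y − Q_#(X))·Q_#(X) ) = 0. Then σ_†² − σ_#² = E[ P_n( (1{A=a}/π(X)²)·( (Y − Q̃(X))² − (Y − Q_#(X))² ) ) ] + E[ P_n( Q̃(X)² − Q_#(X)² ) ] − ( E[ψ̃²] − ψ_*² ), where the subtracted term E[ψ̃²] − ψ_*² is the paper's nonnegative order-n^{−1} term. -/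
open MeasureTheory ProbabilityTheory

noncomputable section

/-- The centered transformation `D(Q, ψ) = T(Q) − ψ`. -/
def Daipw {𝒳 : Type*} (ps : 𝒳 → ℝ) (a : Bool) (Q : 𝒳 → ℝ) (ψ : ℝ)
    (v : 𝒳 × Bool × ℝ) : ℝ :=
  Taipw ps a Q v - ψ

lemma ncf_alg {p y q : ℝ} (ind : ℝ) (hind : ind = 0 ∨ ind = 1) (hp : p ≠ 0) :
    (ind * (y - q) / p + q) ^ 2
      = ind / p ^ 2 * (y - q) ^ 2 + 2 * (ind / p * (y - q) * q) + q ^ 2 := by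
  rcases hind with h | h <;> subst h <;> field_simp <;> ring

lemma ncf_sum_sq {n : ℕ} (hn : 0 < n) (t : Fin n → ℝ) (ψ : ℝ)
    (hψ : ψ = (n : ℝ)⁻¹ * ∑ i, t i) :
    (n : ℝ)⁻¹ * ∑ i, (t i - ψ) ^ 2 = (n : ℝ)⁻¹ * ∑ i, (t i) ^ 2 - ψ ^ 2 := by
  have hn' : (n : ℝ) ≠ 0 := Nat.cast_ne_zero.mpr hn.ne'
  have hS : ∑ i, t i = n * ψ := by rw [hψ]; field_simp
  have hexp : ∑ i, (t i - ψ) ^ 2 = ∑ i, (t i) ^ 2 - (2 * ψ) * ∑ i, t i + n * ψ ^ 2 := by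
    rw [Finset.sum_congr rfl (fun i _ => by ring :
        ∀ i ∈ Finset.univ, (t i - ψ) ^ 2 = ((t i) ^ 2 - (2 * ψ) * (t i)) + ψ ^ 2),
      Finset.sum_add_distrib, Finset.sum_sub_distrib, ← Finset.mul_sum, Finset.sum_const,
      Finset.card_univ, Fintype.card_fin, nsmul_eq_mul]
  rw [hexp, hS]
  field_simp
  ring

/-- Pull-out property for integrals against a conditional expectation w.r.t. the
first-coordinate σ-algebra. -/
lemma ncf_pullout {𝒳 : Type*} [MeasurableSpace 𝒳]
    (ν : Measure (𝒳 × Bool × ℝ)) [IsProbabilityMeasure ν]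
    (g : 𝒳 → ℝ) (hg : Measurable g) (c : ℝ) (hgb : ∀ x, |g x| ≤ c)
    (f : 𝒳 × Bool × ℝ → ℝ) (hf : Integrable f ν) :
    ∫ v, g v.1 * f v ∂ν
      = ∫ v, g v.1 * (ν[f | MeasurableSpace.comap Prod.fst inferInstance]) v ∂ν := by
  have hm : (MeasurableSpace.comap (Prod.fst : 𝒳 × Bool × ℝ → 𝒳) inferInstance)
      ≤ Prod.instMeasurableSpace := measurable_fst.comap_le
  have hfstm : Measurable[MeasurableSpace.comap (Prod.fst : 𝒳 × Bool × ℝ → 𝒳) inferInstance]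
      (Prod.fst : 𝒳 × Bool × ℝ → 𝒳) := Measurable.of_comap_le le_rfl
  have hsm : StronglyMeasurable[MeasurableSpace.comap (Prod.fst : 𝒳 × Bool × ℝ → 𝒳) inferInstance]
      (fun v : 𝒳 × Bool × ℝ => g v.1) := (hg.comp hfstm).stronglyMeasurable
  have hbd : ∀ᵐ v ∂ν, ‖(fun v : 𝒳 × Bool × ℝ => g v.1) v‖ ≤ c :=
    Filter.Eventually.of_forall fun v => by simpa using hgb v.1
  have h := condExp_stronglyMeasurable_mul_of_bound hm hsm hf c hbd
  calc ∫ v, g v.1 * f v ∂ν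
      = ∫ v, ((fun v : 𝒳 × Bool × ℝ => g v.1) * f) v ∂ν := rfl
    _ = ∫ v, (ν[(fun v : 𝒳 × Bool × ℝ => g v.1) * f |
          MeasurableSpace.comap Prod.fst inferInstance]) v ∂ν := (integral_condExp hm).symm
    _ = ∫ v, ((fun v : 𝒳 × Bool × ℝ => g v.1)
          * ν[f | MeasurableSpace.comap Prod.fst inferInstance]) v ∂ν := integral_congr_ae h
    _ = ∫ v, g v.1 * (ν[f | MeasurableSpace.comap Prod.fst inferInstance]) v ∂ν := rfl

lemma ncf_abs_le_of_sq_le {x c d : ℝ} (hd : 1 ≤ d) (hc : 0 ≤ c) (h : x ^ 2 ≤ c * d) :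
    |x| ≤ (c + 1) * d := by
  nlinarith [sq_abs x, sq_nonneg (|x| - 1), abs_nonneg x, mul_nonneg hc (le_trans zero_le_one hd)]

lemma ncf_avg_sq_le {n : ℕ} (hn : 0 < n) (t : Fin n → ℝ) :
    ((n : ℝ)⁻¹ * ∑ i, t i) ^ 2 ≤ (n : ℝ)⁻¹ * ∑ i, (t i) ^ 2 := by
  have hn' : (0:ℝ) < n := Nat.cast_pos.mpr hn
  have h := sq_sum_le_card_mul_sum_sq (s := (Finset.univ : Finset (Fin n))) (f := t)
  simp only [Finset.card_univ, Fintype.card_fin] at h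
  have h2 : ((n : ℝ)⁻¹ * ∑ i, t i) ^ 2 = ((n:ℝ)⁻¹)^2 * (∑ i, t i)^2 := by ring
  rw [h2]
  calc ((n:ℝ)⁻¹)^2 * (∑ i, t i)^2 ≤ ((n:ℝ)⁻¹)^2 * ((n:ℝ) * ∑ i, (t i)^2) := by
        apply mul_le_mul_of_nonneg_left _ (by positivity)
        exact_mod_cast h
    _ = (n : ℝ)⁻¹ * ∑ i, (t i) ^ 2 := by field_simp

lemma ncf_bound_e1 {r p y q M ind : ℝ} (hr : 0 < r) (hp : 0 < p) (hpr : p⁻¹ ≤ r)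
    (hq : |q| ≤ M) (hind : ind = 0 ∨ ind = 1) :
    0 ≤ ind / p ^ 2 * (y - q) ^ 2 ∧
      ind / p ^ 2 * (y - q) ^ 2 ≤ (4 * r ^ 2 + 2) * (M ^ 2 + 1) * (y ^ 2 + 1) := by
  have hq2 : q ^ 2 ≤ M ^ 2 := by nlinarith [abs_nonneg q, sq_abs q]
  have hM0 : 0 ≤ M := le_trans (abs_nonneg q) hq
  rcases hind with h | h <;> subst h
  · constructor
    · positivity
    · have : (0:ℝ) / p ^ 2 * (y - q) ^ 2 = 0 := by ring
      rw [this]; positivity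
  · have hu2 : (p ^ 2)⁻¹ ≤ r ^ 2 := by
      have h1 : (p⁻¹) ^ 2 ≤ r ^ 2 := by nlinarith [inv_pos.mpr hp]
      calc (p ^ 2)⁻¹ = (p⁻¹) ^ 2 := by rw [inv_pow]
        _ ≤ r ^ 2 := h1
    have hC : (y - q) ^ 2 ≤ 2 * y ^ 2 + 2 * M ^ 2 := by nlinarith [sq_nonneg (y + q)]
    constructor
    · positivity
    · have h1 : (1:ℝ) / p ^ 2 * (y - q) ^ 2 = (y - q) ^ 2 * (p ^ 2)⁻¹ := by ring
      rw [h1]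
      have h2 : (y - q) ^ 2 * (p ^ 2)⁻¹ ≤ (y - q) ^ 2 * r ^ 2 :=
        mul_le_mul_of_nonneg_left hu2 (sq_nonneg _)
      have h3 : (y - q) ^ 2 * r ^ 2 ≤ (2 * y ^ 2 + 2 * M ^ 2) * r ^ 2 :=
        mul_le_mul_of_nonneg_right hC (sq_nonneg r)
      nlinarith [mul_nonneg (sq_nonneg r) (sq_nonneg y), mul_nonneg (sq_nonneg r) (sq_nonneg M),
        mul_nonneg (mul_nonneg (sq_nonneg r) (sq_nonneg M)) (sq_nonneg y),
        mul_nonneg (sq_nonneg M) (sq_nonneg y), sq_nonneg y, sq_nonneg r, sq_nonneg M]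

lemma ncf_bound_T {r p y q M ind : ℝ} (hr : 0 < r) (hp : 0 < p) (hpr : p⁻¹ ≤ r)
    (hq : |q| ≤ M) (hind : ind = 0 ∨ ind = 1) :
    (ind * (y - q) / p + q) ^ 2 ≤ (4 * r ^ 2 + 2) * (M ^ 2 + 1) * (y ^ 2 + 1) := by
  have hq2 : q ^ 2 ≤ M ^ 2 := by nlinarith [abs_nonneg q, sq_abs q]
  have hM0 : 0 ≤ M := le_trans (abs_nonneg q) hq
  rcases hind with h | h <;> subst h
  · have h0 : ((0:ℝ) * (y - q) / p + q) ^ 2 = q ^ 2 := by ring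
    rw [h0]
    nlinarith [sq_nonneg y, sq_nonneg r, mul_nonneg (sq_nonneg r) (sq_nonneg y),
      mul_nonneg (sq_nonneg r) (sq_nonneg M),
      mul_nonneg (mul_nonneg (sq_nonneg r) (sq_nonneg M)) (sq_nonneg y),
      mul_nonneg (sq_nonneg M) (sq_nonneg y)]
  · have h1 : ((1:ℝ) * (y - q) / p + q) ^ 2 = ((y - q) * p⁻¹ + q) ^ 2 := by ring
    rw [h1]
    have hA : ((y - q) * p⁻¹ + q) ^ 2 ≤ 2 * ((y - q) * p⁻¹) ^ 2 + 2 * q ^ 2 := by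
      nlinarith [sq_nonneg ((y - q) * p⁻¹ - q)]
    have hB : ((y - q) * p⁻¹) ^ 2 ≤ (y - q) ^ 2 * r ^ 2 := by
      have h2 : (p⁻¹) ^ 2 ≤ r ^ 2 := by nlinarith [inv_pos.mpr hp]
      calc ((y - q) * p⁻¹) ^ 2 = (y - q) ^ 2 * (p⁻¹) ^ 2 := by ring
        _ ≤ (y - q) ^ 2 * r ^ 2 := mul_le_mul_of_nonneg_left h2 (sq_nonneg _)
    have hC : (y - q) ^ 2 ≤ 2 * y ^ 2 + 2 * M ^ 2 := by nlinarith [sq_nonneg (y + q)]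
    have hD : (y - q) ^ 2 * r ^ 2 ≤ (2 * y ^ 2 + 2 * M ^ 2) * r ^ 2 :=
      mul_le_mul_of_nonneg_right hC (sq_nonneg r)
    nlinarith [mul_nonneg (sq_nonneg r) (sq_nonneg y), mul_nonneg (sq_nonneg r) (sq_nonneg M),
      mul_nonneg (mul_nonneg (sq_nonneg r) (sq_nonneg M)) (sq_nonneg y),
      mul_nonneg (sq_nonneg M) (sq_nonneg y), sq_nonneg y, sq_nonneg r, sq_nonneg M]

lemma ncf_avg_int {Ω 𝒱 : Type*} [MeasurableSpace Ω] [MeasurableSpace 𝒱]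
    (P : Measure Ω) (ν : Measure 𝒱) {n : ℕ} (hn : 0 < n)
    (V : Fin n → Ω → 𝒱) (hVmeas : ∀ i, Measurable (V i))
    (hVlaw : ∀ i, Measure.map (V i) P = ν)
    (f : 𝒱 → ℝ) (hf : Integrable f ν) :
    Integrable (fun ω => (n : ℝ)⁻¹ * ∑ i, f (V i ω)) P := by
  have hci : ∀ i, Integrable (fun ω => f (V i ω)) P := fun i => by
    have h := hf; rw [← hVlaw i] at h; exact h.comp_measurable (hVmeas i)
  exact (integrable_finset_sum _ (fun i _ => hci i)).const_mul _

lemma ncf_avg {Ω 𝒱 : Type*} [MeasurableSpace Ω] [MeasurableSpace 𝒱]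
    (P : Measure Ω) (ν : Measure 𝒱) {n : ℕ} (hn : 0 < n)
    (V : Fin n → Ω → 𝒱) (hVmeas : ∀ i, Measurable (V i))
    (hVlaw : ∀ i, Measure.map (V i) P = ν)
    (f : 𝒱 → ℝ) (hf : Integrable f ν) :
    ∫ ω, (n : ℝ)⁻¹ * ∑ i, f (V i ω) ∂P = ∫ x, f x ∂ν := by
  have hn' : (n : ℝ) ≠ 0 := Nat.cast_ne_zero.mpr hn.ne'
  have hci : ∀ i, Integrable (fun ω => f (V i ω)) P := fun i => by
    have h := hf; rw [← hVlaw i] at h; exact h.comp_measurable (hVmeas i)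
  have hmap : ∀ i : Fin n, ∫ ω, f (V i ω) ∂P = ∫ x, f x ∂ν := fun i => by
    rw [← hVlaw i]
    exact (integral_map (hVmeas i).aemeasurable (by rw [hVlaw i]; exact hf.1)).symm
  rw [integral_const_mul, integral_finset_sum _ (fun i _ => hci i),
    Finset.sum_congr rfl fun i _ => hmap i, Finset.sum_const, Finset.card_univ,
    Fintype.card_fin, nsmul_eq_mul]
  field_simp


set_option maxHeartbeats 2000000 in
/-- **Exact decomposition of the bias of the non-cross-fit plug-in variance estimator
under projection conditions** (Proposition 2).
In the non-cross-fit setup, if `Q̃` and `Q_#` are projections, i.e. almost surely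
`P_n((1{A=a}/π(X))·(Y − Q̃(X))·Q̃(X)) = 0` and
`E((1{A=a}/π(X))·(Y − Q_#(X))·Q_#(X)) = 0`, then
`σ_†² − σ_#² = E[P_n((1{A=a}/π(X)²)·((Y − Q̃(X))² − (Y − Q_#(X))²))]
  + E[P_n(Q̃(X)² − Q_#(X)²)] − (E[ψ̃²] − ψ_*²)`. -/
theorem noncrossfit_variance_bias_projection {𝒳 Ω : Type*}
    [MeasurableSpace 𝒳] [MeasurableSpace Ω]
    (P : Measure Ω) [IsProbabilityMeasure P]
    (ν : Measure (𝒳 × Bool × ℝ)) [IsProbabilityMeasure ν]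
    (a : Bool) (ps : 𝒳 → ℝ) (hps : Measurable ps)
    (τ : ℝ) (hτ : 0 < τ) (hτ' : τ ≤ 1 / 2)
    (hpos : ∀ x, τ ≤ ps x ∧ ps x ≤ 1 - τ)
    (hprop : ν[(fun v => if v.2.1 = a then (1 : ℝ) else 0) |
        MeasurableSpace.comap Prod.fst inferInstance] =ᵐ[ν] fun v => ps v.1)
    (Qstar : 𝒳 → ℝ) (hQstarm : Measurable Qstar)
    (houtcome : ν[(fun v => (if v.2.1 = a then (1 : ℝ) else 0) * v.2.2) |
        MeasurableSpace.comap Prod.fst inferInstance] =ᵐ[ν] fun v => ps v.1 * Qstar v.1)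
    (hY2 : Integrable (fun v : 𝒳 × Bool × ℝ => v.2.2 ^ 2) ν)
    (M : ℝ) (hM : 0 < M)
    (Qref : 𝒳 → ℝ) (hQrefm : Measurable Qref) (hQrefb : ∀ x, |Qref x| ≤ M)
    (n : ℕ) (hn : 0 < n)
    (V : Fin n → Ω → 𝒳 × Bool × ℝ)
    (hVmeas : ∀ i, Measurable (V i))
    (hViid : iIndepFun V P)
    (hVlaw : ∀ i, Measure.map (V i) P = ν)
    (Qtilde : Ω → 𝒳 → ℝ) (hQtildem : Measurable (Function.uncurry Qtilde))
    (hQtildeb : ∀ᵐ ω ∂P, ∀ x, |Qtilde ω x| ≤ M)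
    (ψs : ℝ) (hψs : ψs = ∫ v, Qstar v.1 ∂ν)
    (ψtilde : Ω → ℝ)
    (hψtilde : ∀ ω, ψtilde ω = (n : ℝ)⁻¹ * ∑ i, Taipw ps a (Qtilde ω) (V i ω))
    (σtilde2 : Ω → ℝ)
    (hσtilde2 : ∀ ω, σtilde2 ω
      = (n : ℝ)⁻¹ * ∑ i, (Taipw ps a (Qtilde ω) (V i ω) - ψtilde ω) ^ 2)
    (σdag2 : ℝ) (hσdag2 : σdag2 = ∫ ω, σtilde2 ω ∂P)
    (σsharp2 : ℝ) (hσsharp2 : σsharp2 = ∫ v, (Daipw ps a Qref ψs v) ^ 2 ∂ν)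
    (hproj1 : ∀ᵐ ω ∂P,
      (n : ℝ)⁻¹ * ∑ i, (if (V i ω).2.1 = a then (1 : ℝ) else 0) / ps (V i ω).1
          * ((V i ω).2.2 - Qtilde ω (V i ω).1) * Qtilde ω (V i ω).1 = 0)
    (hproj2 : (∫ v, (if v.2.1 = a then (1 : ℝ) else 0) / ps v.1
        * (v.2.2 - Qref v.1) * Qref v.1 ∂ν) = 0) :
    σdag2 - σsharp2
      = (∫ ω, (n : ℝ)⁻¹ * ∑ i, (if (V i ω).2.1 = a then (1 : ℝ) else 0)
            / (ps (V i ω).1) ^ 2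
            * (((V i ω).2.2 - Qtilde ω (V i ω).1) ^ 2
              - ((V i ω).2.2 - Qref (V i ω).1) ^ 2) ∂P)
        + (∫ ω, (n : ℝ)⁻¹ * ∑ i, ((Qtilde ω (V i ω).1) ^ 2
            - (Qref (V i ω).1) ^ 2) ∂P)
        - ((∫ ω, (ψtilde ω) ^ 2 ∂P) - ψs ^ 2) := by
  classical
  have hr : (0:ℝ) < τ⁻¹ := inv_pos.mpr hτ
  set r : ℝ := τ⁻¹ with hr_def
  set K : ℝ := (4 * r ^ 2 + 2) * (M ^ 2 + 1) with hK_def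
  have hK0 : 0 ≤ K := by positivity
  have hps_pos : ∀ x, 0 < ps x := fun x => lt_of_lt_of_le hτ (hpos x).1
  have hps_ne : ∀ x, ps x ≠ 0 := fun x => (hps_pos x).ne'
  have hinv_le : ∀ x, (ps x)⁻¹ ≤ r := fun x => inv_anti₀ hτ (hpos x).1
  have hn' : (n:ℝ) ≠ 0 := Nat.cast_ne_zero.mpr hn.ne'
  have hind01 : ∀ v : 𝒳 × Bool × ℝ,
      (if v.2.1 = a then (1:ℝ) else 0) = 0 ∨ (if v.2.1 = a then (1:ℝ) else 0) = 1 :=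
    fun v => by by_cases h : v.2.1 = a <;> simp [h]
  -- measurability on ν side
  have hIndm : Measurable (fun v : 𝒳 × Bool × ℝ => if v.2.1 = a then (1:ℝ) else 0) :=
    (measurable_from_top (f := fun b : Bool => if b = a then (1:ℝ) else 0)).comp
      (measurable_fst.comp measurable_snd)
  have hYm : Measurable (fun v : 𝒳 × Bool × ℝ => v.2.2) := measurable_snd.comp measurable_snd
  have hpsm' : Measurable (fun v : 𝒳 × Bool × ℝ => ps v.1) := hps.comp measurable_fst
  have hQrefm' : Measurable (fun v : 𝒳 × Bool × ℝ => Qref v.1) := hQrefm.comp measurable_fst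
  -- ν-side functions
  set g1 : 𝒳 × Bool × ℝ → ℝ := fun v =>
    (if v.2.1 = a then (1:ℝ) else 0) / (ps v.1) ^ 2 * (v.2.2 - Qref v.1) ^ 2 with hg1_def
  set g2 : 𝒳 × Bool × ℝ → ℝ := fun v => (Qref v.1) ^ 2 with hg2_def
  have hKint : Integrable (fun v : 𝒳 × Bool × ℝ => K * (v.2.2 ^ 2 + 1)) ν :=
    (hY2.add (integrable_const 1)).const_mul K
  have hg1m : Measurable g1 :=
    (hIndm.div (hpsm'.pow_const 2)).mul ((hYm.sub hQrefm').pow_const 2)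
  have hg2m : Measurable g2 := hQrefm'.pow_const 2
  have hg1b : ∀ v, 0 ≤ g1 v ∧ g1 v ≤ K * (v.2.2 ^ 2 + 1) := fun v => by
    simpa [hg1_def, hK_def, mul_assoc] using
      ncf_bound_e1 hr (hps_pos v.1) (hinv_le v.1) (hQrefb v.1) (hind01 v)
  have hg1int : Integrable g1 ν :=
    hKint.mono' hg1m.aestronglyMeasurable (Filter.Eventually.of_forall fun v => by
      rw [Real.norm_eq_abs, abs_of_nonneg (hg1b v).1]; exact (hg1b v).2)
  have hM2K : M ^ 2 ≤ K := by rw [hK_def]; nlinarith [sq_nonneg r, sq_nonneg M]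
  have hg2b : ∀ v : 𝒳 × Bool × ℝ, 0 ≤ g2 v ∧ g2 v ≤ K * (v.2.2 ^ 2 + 1) := fun v => by
    constructor
    · exact sq_nonneg _
    · have h1 : g2 v ≤ M ^ 2 := by
        have := hQrefb v.1
        simp only [hg2_def]
        nlinarith [abs_nonneg (Qref v.1), sq_abs (Qref v.1)]
      have h2 : K ≤ K * (v.2.2 ^ 2 + 1) := le_mul_of_one_le_right hK0 (by nlinarith [sq_nonneg v.2.2])
      linarith
  have hg2int : Integrable g2 ν :=
    hKint.mono' hg2m.aestronglyMeasurable (Filter.Eventually.of_forall fun v => by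
      rw [Real.norm_eq_abs, abs_of_nonneg (hg2b v).1]; exact (hg2b v).2)
  -- T_# facts
  have hTm : Measurable (fun v => Taipw ps a Qref v) := by
    simp only [Taipw]
    exact ((hIndm.mul (hYm.sub hQrefm')).div hpsm').add hQrefm'
  have hT2b : ∀ v : 𝒳 × Bool × ℝ, (Taipw ps a Qref v) ^ 2 ≤ K * (v.2.2 ^ 2 + 1) := fun v => by
    simpa [Taipw, hK_def, mul_assoc] using
      ncf_bound_T hr (hps_pos v.1) (hinv_le v.1) (hQrefb v.1) (hind01 v)
  have hT2int : Integrable (fun v => (Taipw ps a Qref v) ^ 2) ν :=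
    hKint.mono' (hTm.pow_const 2).aestronglyMeasurable (Filter.Eventually.of_forall fun v => by
      rw [Real.norm_eq_abs, abs_of_nonneg (sq_nonneg _)]; exact hT2b v)
  have hTint : Integrable (fun v => Taipw ps a Qref v) ν := by
    refine ((hY2.add (integrable_const 1)).const_mul (K + 1)).mono'
      hTm.aestronglyMeasurable (Filter.Eventually.of_forall fun v => ?_)
    rw [Real.norm_eq_abs]
    exact ncf_abs_le_of_sq_le (d := v.2.2 ^ 2 + 1) (by nlinarith [sq_nonneg v.2.2]) hK0 (hT2b v)
  have halgsharp : ∀ v : 𝒳 × Bool × ℝ, (Taipw ps a Qref v) ^ 2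
      = g1 v + 2 * ((if v.2.1 = a then (1:ℝ) else 0) / ps v.1
          * (v.2.2 - Qref v.1) * Qref v.1) + g2 v := fun v =>
    ncf_alg _ (hind01 v) (hps_ne v.1)
  have hmidint : Integrable (fun v : 𝒳 × Bool × ℝ =>
      (if v.2.1 = a then (1:ℝ) else 0) / ps v.1 * (v.2.2 - Qref v.1) * Qref v.1) ν := by
    refine (((hT2int.sub hg1int).sub hg2int).const_mul (2⁻¹ : ℝ)).congr
      (Filter.Eventually.of_forall fun v => ?_)
    have := halgsharp v
    simp only [Pi.sub_apply]
    linarith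
  -- step (a): ∫ T_# = ψs
  have hIndYb : ∀ v : 𝒳 × Bool × ℝ, |(if v.2.1 = a then (1:ℝ) else 0) * v.2.2| ≤ v.2.2 ^ 2 + 1 := by
    intro v
    by_cases h : v.2.1 = a <;> simp [h] <;>
      nlinarith [sq_nonneg (|v.2.2| - 1), abs_nonneg v.2.2, sq_abs v.2.2]
  have hIndYint : Integrable (fun v : 𝒳 × Bool × ℝ =>
      (if v.2.1 = a then (1:ℝ) else 0) * v.2.2) ν :=
    (hY2.add (integrable_const 1)).mono' (hIndm.mul hYm).aestronglyMeasurable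
      (Filter.Eventually.of_forall fun v => by rw [Real.norm_eq_abs]; exact hIndYb v)
  have hIndint : Integrable (fun v : 𝒳 × Bool × ℝ =>
      if v.2.1 = a then (1:ℝ) else 0) ν :=
    (integrable_const 1).mono' hIndm.aestronglyMeasurable
      (Filter.Eventually.of_forall fun v => by
        rcases hind01 v with h | h <;> rw [Real.norm_eq_abs, h] <;> norm_num)
  have hTψ : ∫ v, Taipw ps a Qref v ∂ν = ψs := by
    have hsplit : ∀ v : 𝒳 × Bool × ℝ, Taipw ps a Qref v
        = (ps v.1)⁻¹ * ((if v.2.1 = a then (1:ℝ) else 0) * v.2.2)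
          - Qref v.1 / ps v.1 * (if v.2.1 = a then (1:ℝ) else 0) + Qref v.1 := fun v => by
      simp only [Taipw]; ring
    have hp1int : Integrable (fun v : 𝒳 × Bool × ℝ =>
        (ps v.1)⁻¹ * ((if v.2.1 = a then (1:ℝ) else 0) * v.2.2)) ν := by
      refine ((hY2.add (integrable_const 1)).const_mul r).mono'
        ((hpsm'.inv).mul (hIndm.mul hYm)).aestronglyMeasurable
        (Filter.Eventually.of_forall fun v => ?_)
      rw [Real.norm_eq_abs, abs_mul, abs_of_pos (inv_pos.mpr (hps_pos v.1))]
      calc (ps v.1)⁻¹ * |(if v.2.1 = a then (1:ℝ) else 0) * v.2.2|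
          ≤ r * (v.2.2 ^ 2 + 1) := by
            refine mul_le_mul (hinv_le v.1) (hIndYb v) (abs_nonneg _) hr.le
        _ = r * (v.2.2 ^ 2 + 1) := rfl
    have hp2int : Integrable (fun v : 𝒳 × Bool × ℝ =>
        Qref v.1 / ps v.1 * (if v.2.1 = a then (1:ℝ) else 0)) ν := by
      refine (integrable_const (M * r)).mono'
        ((hQrefm'.div hpsm').mul hIndm).aestronglyMeasurable
        (Filter.Eventually.of_forall fun v => ?_)
      rw [Real.norm_eq_abs, abs_mul, abs_div, abs_of_pos (hps_pos v.1)]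
      have hdiv : |Qref v.1| / ps v.1 ≤ M * r := by
        rw [div_eq_mul_inv]
        exact mul_le_mul (hQrefb v.1) (hinv_le v.1) (inv_nonneg.mpr (hps_pos v.1).le) hM.le
      have hind : |(if v.2.1 = a then (1:ℝ) else 0)| ≤ 1 := by
        rcases hind01 v with h | h <;> rw [h] <;> norm_num
      calc |Qref v.1| / ps v.1 * |(if v.2.1 = a then (1:ℝ) else 0)|
          ≤ M * r * 1 := mul_le_mul hdiv hind (abs_nonneg _) (by positivity)
        _ = M * r := mul_one _
    have hp3int : Integrable (fun v : 𝒳 × Bool × ℝ => Qref v.1) ν :=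
      (integrable_const M).mono' hQrefm'.aestronglyMeasurable
        (Filter.Eventually.of_forall fun v => by rw [Real.norm_eq_abs]; exact hQrefb v.1)
    have hpull1 : ∫ v, (ps v.1)⁻¹ * ((if v.2.1 = a then (1:ℝ) else 0) * v.2.2) ∂ν
        = ∫ v, Qstar v.1 ∂ν := by
      calc ∫ v, (ps v.1)⁻¹ * ((if v.2.1 = a then (1:ℝ) else 0) * v.2.2) ∂ν
          = ∫ v, (ps v.1)⁻¹
              * (ν[(fun v : 𝒳 × Bool × ℝ => (if v.2.1 = a then (1:ℝ) else 0) * v.2.2) |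
                  MeasurableSpace.comap Prod.fst inferInstance]) v ∂ν :=
            ncf_pullout ν (fun x => (ps x)⁻¹) hps.inv r
              (fun x => by rw [abs_of_pos (inv_pos.mpr (hps_pos x))]; exact hinv_le x)
              _ hIndYint
        _ = ∫ v, (ps v.1)⁻¹ * (ps v.1 * Qstar v.1) ∂ν :=
            integral_congr_ae (houtcome.mono fun v hv => by dsimp only; rw [hv])
        _ = ∫ v, Qstar v.1 ∂ν :=
            integral_congr_ae (Filter.Eventually.of_forall fun v => by
              field_simp [hps_ne v.1])
    have hpull2 : ∫ v, Qref v.1 / ps v.1 * (if v.2.1 = a then (1:ℝ) else 0) ∂ν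
        = ∫ v, Qref v.1 ∂ν := by
      calc ∫ v, Qref v.1 / ps v.1 * (if v.2.1 = a then (1:ℝ) else 0) ∂ν
          = ∫ v, Qref v.1 / ps v.1
              * (ν[(fun v : 𝒳 × Bool × ℝ => if v.2.1 = a then (1:ℝ) else 0) |
                  MeasurableSpace.comap Prod.fst inferInstance]) v ∂ν := by
            refine ncf_pullout ν (fun x => Qref x / ps x) (hQrefm.div hps) (M * r)
              (fun x => ?_) _ hIndint
            rw [abs_div, abs_of_pos (hps_pos x), div_eq_mul_inv]
            exact mul_le_mul (hQrefb x) (hinv_le x) (inv_nonneg.mpr (hps_pos x).le) hM.le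
        _ = ∫ v, Qref v.1 / ps v.1 * ps v.1 ∂ν :=
            integral_congr_ae (hprop.mono fun v hv => by dsimp only; rw [hv])
        _ = ∫ v, Qref v.1 ∂ν :=
            integral_congr_ae (Filter.Eventually.of_forall fun v => by
              field_simp [hps_ne v.1])
    have hp12 : Integrable (fun v : 𝒳 × Bool × ℝ =>
        (ps v.1)⁻¹ * ((if v.2.1 = a then (1:ℝ) else 0) * v.2.2)
          - Qref v.1 / ps v.1 * (if v.2.1 = a then (1:ℝ) else 0)) ν := hp1int.sub hp2int
    calc ∫ v, Taipw ps a Qref v ∂ν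
        = ∫ v, ((ps v.1)⁻¹ * ((if v.2.1 = a then (1:ℝ) else 0) * v.2.2)
            - Qref v.1 / ps v.1 * (if v.2.1 = a then (1:ℝ) else 0) + Qref v.1) ∂ν :=
          integral_congr_ae (Filter.Eventually.of_forall hsplit)
      _ = (∫ v, ((ps v.1)⁻¹ * ((if v.2.1 = a then (1:ℝ) else 0) * v.2.2)
            - Qref v.1 / ps v.1 * (if v.2.1 = a then (1:ℝ) else 0)) ∂ν)
          + ∫ v, Qref v.1 ∂ν := integral_add hp12 hp3int
      _ = (∫ v, (ps v.1)⁻¹ * ((if v.2.1 = a then (1:ℝ) else 0) * v.2.2) ∂ν)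
          - (∫ v, Qref v.1 / ps v.1 * (if v.2.1 = a then (1:ℝ) else 0) ∂ν)
          + ∫ v, Qref v.1 ∂ν := by rw [integral_sub hp1int hp2int]
      _ = ψs := by rw [hpull1, hpull2, hψs]; ring
  -- step (b): σsharp2 decomposition
  have hsharp : σsharp2 = (∫ v, g1 v ∂ν) + (∫ v, g2 v ∂ν) - ψs ^ 2 := by
    rw [hσsharp2]
    have hDeq : ∀ v : 𝒳 × Bool × ℝ, (Daipw ps a Qref ψs v) ^ 2
        = (Taipw ps a Qref v) ^ 2 - 2 * ψs * Taipw ps a Qref v + ψs ^ 2 := fun v => by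
      simp only [Daipw]; ring
    have h2ψ : Integrable (fun v => 2 * ψs * Taipw ps a Qref v) ν := hTint.const_mul _
    have hsub : Integrable (fun v =>
        (Taipw ps a Qref v) ^ 2 - 2 * ψs * Taipw ps a Qref v) ν := hT2int.sub h2ψ
    have hadd1 : Integrable (fun v => g1 v
        + 2 * ((if v.2.1 = a then (1:ℝ) else 0) / ps v.1
            * (v.2.2 - Qref v.1) * Qref v.1)) ν := hg1int.add (hmidint.const_mul 2)
    calc ∫ v, (Daipw ps a Qref ψs v) ^ 2 ∂ν
        = ∫ v, ((Taipw ps a Qref v) ^ 2 - 2 * ψs * Taipw ps a Qref v + ψs ^ 2) ∂ν :=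
          integral_congr_ae (Filter.Eventually.of_forall hDeq)
      _ = (∫ v, ((Taipw ps a Qref v) ^ 2 - 2 * ψs * Taipw ps a Qref v) ∂ν)
          + ∫ _v, (ψs ^ 2 : ℝ) ∂ν := integral_add hsub (integrable_const _)
      _ = (∫ v, (Taipw ps a Qref v) ^ 2 ∂ν) - (∫ v, 2 * ψs * Taipw ps a Qref v ∂ν)
          + ψs ^ 2 := by rw [integral_sub hT2int h2ψ, integral_const]; simp
      _ = (∫ v, (Taipw ps a Qref v) ^ 2 ∂ν) - 2 * ψs * ψs + ψs ^ 2 := by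
          rw [integral_const_mul, hTψ]
      _ = (∫ v, (g1 v + 2 * ((if v.2.1 = a then (1:ℝ) else 0) / ps v.1
            * (v.2.2 - Qref v.1) * Qref v.1) + g2 v) ∂ν) - 2 * ψs * ψs + ψs ^ 2 := by
          rw [integral_congr_ae (Filter.Eventually.of_forall halgsharp)]
      _ = ((∫ v, g1 v ∂ν) + 2 * (∫ v, (if v.2.1 = a then (1:ℝ) else 0) / ps v.1
            * (v.2.2 - Qref v.1) * Qref v.1 ∂ν) + ∫ v, g2 v ∂ν)
          - 2 * ψs * ψs + ψs ^ 2 := by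
          rw [integral_add hadd1 hg2int, integral_add hg1int (hmidint.const_mul 2),
            integral_const_mul]
      _ = (∫ v, g1 v ∂ν) + (∫ v, g2 v ∂ν) - ψs ^ 2 := by rw [hproj2]; ring
  -- Ω-side measurability
  have hQti : ∀ i, Measurable (fun ω => Qtilde ω ((V i ω).1)) := fun i =>
    hQtildem.comp (measurable_id.prodMk (measurable_fst.comp (hVmeas i)))
  have hYi : ∀ i, Measurable (fun ω => (V i ω).2.2) := fun i =>
    (measurable_snd.comp measurable_snd).comp (hVmeas i)
  have hIndi : ∀ i, Measurable (fun ω => if (V i ω).2.1 = a then (1:ℝ) else 0) := fun i =>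
    (measurable_from_top (f := fun b : Bool => if b = a then (1:ℝ) else 0)).comp
      ((measurable_fst.comp measurable_snd).comp (hVmeas i))
  have hpsi : ∀ i, Measurable (fun ω => ps (V i ω).1) := fun i =>
    hps.comp (measurable_fst.comp (hVmeas i))
  have hTωi : ∀ i, Measurable (fun ω => Taipw ps a (Qtilde ω) (V i ω)) := fun i => by
    simp only [Taipw]
    exact (((hIndi i).mul ((hYi i).sub (hQti i))).div (hpsi i)).add (hQti i)
  have hψm : Measurable ψtilde := by
    have h : ψtilde = fun ω => (n : ℝ)⁻¹ * ∑ i, Taipw ps a (Qtilde ω) (V i ω) :=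
      funext hψtilde
    rw [h]
    exact (Finset.measurable_sum _ fun i _ => hTωi i).const_mul _
  have hσm : Measurable σtilde2 := by
    have h : σtilde2 = fun ω => (n : ℝ)⁻¹ * ∑ i, (Taipw ps a (Qtilde ω) (V i ω) - ψtilde ω) ^ 2 :=
      funext hσtilde2
    rw [h]
    exact (Finset.measurable_sum _ fun i _ => ((hTωi i).sub hψm).pow_const 2).const_mul _
  -- dominating function
  set G : Ω → ℝ := fun ω => (n:ℝ)⁻¹ * ∑ i, K * ((V i ω).2.2 ^ 2 + 1) with hG_def
  have hGint : Integrable G P := ncf_avg_int P ν hn V hVmeas hVlaw _ hKint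
  -- Ω-side functions
  set Atil : Ω → ℝ := fun ω => (n:ℝ)⁻¹ * ∑ i,
    (if (V i ω).2.1 = a then (1:ℝ) else 0) / (ps (V i ω).1) ^ 2
      * ((V i ω).2.2 - Qtilde ω (V i ω).1) ^ 2 with hAtil_def
  set Btil : Ω → ℝ := fun ω => (n:ℝ)⁻¹ * ∑ i, (Qtilde ω (V i ω).1) ^ 2 with hBtil_def
  set Acomp : Ω → ℝ := fun ω => (n:ℝ)⁻¹ * ∑ i, g1 (V i ω) with hAcomp_def
  set Bcomp : Ω → ℝ := fun ω => (n:ℝ)⁻¹ * ∑ i, g2 (V i ω) with hBcomp_def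
  have hAtilm : Measurable Atil :=
    (Finset.measurable_sum _ fun i _ =>
      ((hIndi i).div ((hpsi i).pow_const 2)).mul (((hYi i).sub (hQti i)).pow_const 2)).const_mul _
  have hBtilm : Measurable Btil :=
    (Finset.measurable_sum _ fun i _ => (hQti i).pow_const 2).const_mul _
  -- per-i pointwise bounds under the boundedness event
  have hTib : ∀ ω, (∀ x, |Qtilde ω x| ≤ M) → ∀ i : Fin n,
      (Taipw ps a (Qtilde ω) (V i ω)) ^ 2 ≤ K * ((V i ω).2.2 ^ 2 + 1) := by
    intro ω hQ i
    simpa [Taipw, hK_def, mul_assoc] using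
      ncf_bound_T hr (hps_pos (V i ω).1) (hinv_le (V i ω).1) (hQ (V i ω).1) (hind01 (V i ω))
  have hsumTb : ∀ ω, (∀ x, |Qtilde ω x| ≤ M) →
      (n:ℝ)⁻¹ * ∑ i, (Taipw ps a (Qtilde ω) (V i ω)) ^ 2 ≤ G ω := by
    intro ω hQ
    exact mul_le_mul_of_nonneg_left (Finset.sum_le_sum fun i _ => hTib ω hQ i)
      (by positivity)
  have hAtil_int : Integrable Atil P := by
    refine hGint.mono' hAtilm.aestronglyMeasurable ?_
    filter_upwards [hQtildeb] with ω hQ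
    have hb : ∀ i : Fin n, 0 ≤ (if (V i ω).2.1 = a then (1:ℝ) else 0) / (ps (V i ω).1) ^ 2
        * ((V i ω).2.2 - Qtilde ω (V i ω).1) ^ 2 ∧
        (if (V i ω).2.1 = a then (1:ℝ) else 0) / (ps (V i ω).1) ^ 2
          * ((V i ω).2.2 - Qtilde ω (V i ω).1) ^ 2 ≤ K * ((V i ω).2.2 ^ 2 + 1) := fun i => by
      simpa [hK_def, mul_assoc] using
        ncf_bound_e1 hr (hps_pos (V i ω).1) (hinv_le (V i ω).1) (hQ (V i ω).1) (hind01 (V i ω))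
    have h0 : 0 ≤ Atil ω := by
      rw [hAtil_def]
      exact mul_nonneg (by positivity) (Finset.sum_nonneg fun i _ => (hb i).1)
    rw [Real.norm_eq_abs, abs_of_nonneg h0, hAtil_def, hG_def]
    exact mul_le_mul_of_nonneg_left (Finset.sum_le_sum fun i _ => (hb i).2) (by positivity)
  have hBtil_int : Integrable Btil P := by
    refine hGint.mono' hBtilm.aestronglyMeasurable ?_
    filter_upwards [hQtildeb] with ω hQ
    have hb : ∀ i : Fin n, (Qtilde ω (V i ω).1) ^ 2 ≤ K * ((V i ω).2.2 ^ 2 + 1) := fun i => by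
      have h1 : (Qtilde ω (V i ω).1) ^ 2 ≤ M ^ 2 := by
        have := hQ (V i ω).1
        nlinarith [abs_nonneg (Qtilde ω (V i ω).1), sq_abs (Qtilde ω (V i ω).1)]
      have h2 : K ≤ K * ((V i ω).2.2 ^ 2 + 1) :=
        le_mul_of_one_le_right hK0 (by nlinarith [sq_nonneg (V i ω).2.2])
      linarith
    have h0 : 0 ≤ Btil ω := by
      rw [hBtil_def]
      exact mul_nonneg (by positivity) (Finset.sum_nonneg fun i _ => sq_nonneg _)
    rw [Real.norm_eq_abs, abs_of_nonneg h0, hBtil_def, hG_def]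
    exact mul_le_mul_of_nonneg_left (Finset.sum_le_sum fun i _ => hb i) (by positivity)
  have hψ2int : Integrable (fun ω => (ψtilde ω) ^ 2) P := by
    refine hGint.mono' (hψm.pow_const 2).aestronglyMeasurable ?_
    filter_upwards [hQtildeb] with ω hQ
    rw [Real.norm_eq_abs, abs_of_nonneg (sq_nonneg _)]
    calc (ψtilde ω) ^ 2 ≤ (n:ℝ)⁻¹ * ∑ i, (Taipw ps a (Qtilde ω) (V i ω)) ^ 2 := by
          rw [hψtilde ω]; exact ncf_avg_sq_le hn _
      _ ≤ G ω := hsumTb ω hQ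
  have hσint : Integrable σtilde2 P := by
    refine hGint.mono' hσm.aestronglyMeasurable ?_
    filter_upwards [hQtildeb] with ω hQ
    have h0 : 0 ≤ σtilde2 ω := by
      rw [hσtilde2 ω]
      exact mul_nonneg (by positivity) (Finset.sum_nonneg fun i _ => sq_nonneg _)
    rw [Real.norm_eq_abs, abs_of_nonneg h0]
    calc σtilde2 ω
        = (n:ℝ)⁻¹ * ∑ i, (Taipw ps a (Qtilde ω) (V i ω)) ^ 2 - (ψtilde ω) ^ 2 := by
          rw [hσtilde2 ω]; exact ncf_sum_sq hn _ _ (hψtilde ω)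
      _ ≤ (n:ℝ)⁻¹ * ∑ i, (Taipw ps a (Qtilde ω) (V i ω)) ^ 2 := by
          nlinarith [sq_nonneg (ψtilde ω)]
      _ ≤ G ω := hsumTb ω hQ
  have hAcomp_int : Integrable Acomp P := ncf_avg_int P ν hn V hVmeas hVlaw _ hg1int
  have hBcomp_int : Integrable Bcomp P := ncf_avg_int P ν hn V hVmeas hVlaw _ hg2int
  have hAcomp_val : ∫ ω, Acomp ω ∂P = ∫ v, g1 v ∂ν := ncf_avg P ν hn V hVmeas hVlaw _ hg1int
  have hBcomp_val : ∫ ω, Bcomp ω ∂P = ∫ v, g2 v ∂ν := ncf_avg P ν hn V hVmeas hVlaw _ hg2int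
  -- a.e. decomposition of σtilde2
  have hdecomp : ∀ᵐ ω ∂P, σtilde2 ω = Atil ω + Btil ω - (ψtilde ω) ^ 2 := by
    filter_upwards [hproj1] with ω hω
    have hsq := ncf_sum_sq hn (fun i => Taipw ps a (Qtilde ω) (V i ω)) (ψtilde ω) (hψtilde ω)
    have hTi : ∀ i : Fin n, (Taipw ps a (Qtilde ω) (V i ω)) ^ 2
        = (if (V i ω).2.1 = a then (1:ℝ) else 0) / (ps (V i ω).1) ^ 2
            * ((V i ω).2.2 - Qtilde ω (V i ω).1) ^ 2
          + 2 * ((if (V i ω).2.1 = a then (1:ℝ) else 0) / ps (V i ω).1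
            * ((V i ω).2.2 - Qtilde ω (V i ω).1) * Qtilde ω (V i ω).1)
          + (Qtilde ω (V i ω).1) ^ 2 := fun i =>
      ncf_alg _ (hind01 (V i ω)) (hps_ne (V i ω).1)
    have h2 : (∑ i, 2 * ((if (V i ω).2.1 = a then (1:ℝ) else 0) / ps (V i ω).1
          * ((V i ω).2.2 - Qtilde ω (V i ω).1) * Qtilde ω (V i ω).1))
        = 2 * ∑ i, (if (V i ω).2.1 = a then (1:ℝ) else 0) / ps (V i ω).1
          * ((V i ω).2.2 - Qtilde ω (V i ω).1) * Qtilde ω (V i ω).1 := by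
      rw [← Finset.mul_sum]
    rw [hσtilde2 ω, hsq, Finset.sum_congr rfl fun i _ => hTi i, Finset.sum_add_distrib,
      Finset.sum_add_distrib, h2]
    simp only [hAtil_def, hBtil_def]
    linear_combination 2 * hω
  have hLHS : σdag2 = (∫ ω, Atil ω ∂P) + (∫ ω, Btil ω ∂P) - ∫ ω, (ψtilde ω) ^ 2 ∂P := by
    rw [hσdag2, integral_congr_ae hdecomp,
      integral_sub ((hAtil_int.add hBtil_int).congr (Filter.Eventually.of_forall fun ω =>
        (Pi.add_apply Atil Btil ω).symm ▸ rfl) :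
        Integrable (fun ω => Atil ω + Btil ω) P) hψ2int,
      integral_add hAtil_int hBtil_int]
  have hR1 : (∫ ω, (n : ℝ)⁻¹ * ∑ i, (if (V i ω).2.1 = a then (1 : ℝ) else 0)
        / (ps (V i ω).1) ^ 2
        * (((V i ω).2.2 - Qtilde ω (V i ω).1) ^ 2
          - ((V i ω).2.2 - Qref (V i ω).1) ^ 2) ∂P)
      = (∫ ω, Atil ω ∂P) - ∫ v, g1 v ∂ν := by
    have hpt : ∀ ω, (n : ℝ)⁻¹ * ∑ i, (if (V i ω).2.1 = a then (1 : ℝ) else 0)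
        / (ps (V i ω).1) ^ 2
        * (((V i ω).2.2 - Qtilde ω (V i ω).1) ^ 2
          - ((V i ω).2.2 - Qref (V i ω).1) ^ 2) = Atil ω - Acomp ω := by
      intro ω
      rw [hAtil_def, hAcomp_def]
      simp only [hg1_def]
      rw [← mul_sub, ← Finset.sum_sub_distrib]
      congr 1
      exact Finset.sum_congr rfl fun i _ => by ring
    calc (∫ ω, (n : ℝ)⁻¹ * ∑ i, (if (V i ω).2.1 = a then (1 : ℝ) else 0)
          / (ps (V i ω).1) ^ 2
          * (((V i ω).2.2 - Qtilde ω (V i ω).1) ^ 2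
            - ((V i ω).2.2 - Qref (V i ω).1) ^ 2) ∂P)
        = ∫ ω, Atil ω - Acomp ω ∂P := integral_congr_ae (Filter.Eventually.of_forall hpt)
      _ = (∫ ω, Atil ω ∂P) - ∫ ω, Acomp ω ∂P := integral_sub hAtil_int hAcomp_int
      _ = (∫ ω, Atil ω ∂P) - ∫ v, g1 v ∂ν := by rw [hAcomp_val]
  have hR2 : (∫ ω, (n : ℝ)⁻¹ * ∑ i, ((Qtilde ω (V i ω).1) ^ 2
        - (Qref (V i ω).1) ^ 2) ∂P)
      = (∫ ω, Btil ω ∂P) - ∫ v, g2 v ∂ν := by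
    have hpt : ∀ ω, (n : ℝ)⁻¹ * ∑ i, ((Qtilde ω (V i ω).1) ^ 2
        - (Qref (V i ω).1) ^ 2) = Btil ω - Bcomp ω := by
      intro ω
      rw [hBtil_def, hBcomp_def]
      simp only [hg2_def]
      rw [← mul_sub, ← Finset.sum_sub_distrib]
    calc (∫ ω, (n : ℝ)⁻¹ * ∑ i, ((Qtilde ω (V i ω).1) ^ 2
          - (Qref (V i ω).1) ^ 2) ∂P)
        = ∫ ω, Btil ω - Bcomp ω ∂P := integral_congr_ae (Filter.Eventually.of_forall hpt)
      _ = (∫ ω, Btil ω ∂P) - ∫ ω, Bcomp ω ∂P := integral_sub hBtil_int hBcomp_int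
      _ = (∫ ω, Btil ω ∂P) - ∫ v, g2 v ∂ν := by rw [hBcomp_val]
  rw [hLHS, hsharp, hR1, hR2]
  ring
end
end
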